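/- arXiv:2302.04704 — 12 statements merged into one kernel-verified Lean document; each statement's English description precedes it below -/
import Mathlib

section
/- Let J be a set and F a family of subsets of J closed under finite unions and intersections with ∅, J ∈ F. If f, g : J → ℝ are bounded F-measurable functions (where h is F-measurable means: for every s < t there exists A ∈ F with {h ≥ t} ⊆ A ⊆ {h ≥ s}), then f + g is bounded and F-measurable. -/
/-- A function `h` is `F`-measurable if for all `s < t` there is `A ∈ F` with
`{h ≥ t} ⊆ A ⊆ {h ≥ s}`. -/
def FMeasurable {J : Type*} (F : Set (Set J)) (h : J → ℝ) : Prop :=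
  ∀ s t : ℝ, s < t → ∃ A ∈ F, {x | t ≤ h x} ⊆ A ∧ A ⊆ {x | s ≤ h x}

lemma biUnion_mem_F {J : Type*} (F : Set (Set J))
    (hempty : ∅ ∈ F) (hunion : ∀ A ∈ F, ∀ B ∈ F, A ∪ B ∈ F)
    (S : ℕ → Set J) (hS : ∀ i, S i ∈ F) :
    ∀ k : ℕ, (⋃ i ∈ Finset.range k, S i) ∈ F := by
  intro k
  induction k with
  | zero => simpa using hempty
  | succ k ih =>
      rw [Finset.range_add_one, Finset.set_biUnion_insert]
      exact hunion _ (hS k) _ ih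

theorem stmt_0 {J : Type*} (F : Set (Set J))
    (hempty : ∅ ∈ F) (huniv : Set.univ ∈ F)
    (hunion : ∀ A ∈ F, ∀ B ∈ F, A ∪ B ∈ F)
    (hinter : ∀ A ∈ F, ∀ B ∈ F, A ∩ B ∈ F)
    (f g : J → ℝ)
    (hfb : ∃ M : ℝ, ∀ x, |f x| ≤ M) (hgb : ∃ M : ℝ, ∀ x, |g x| ≤ M)
    (hf : FMeasurable F f) (hg : FMeasurable F g) :
    (∃ M : ℝ, ∀ x, |f x + g x| ≤ M) ∧ FMeasurable F (fun x => f x + g x) := by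
  obtain ⟨Mf, hMf⟩ := hfb
  obtain ⟨Mg, hMg⟩ := hgb
  constructor
  · exact ⟨Mf + Mg, fun x => (abs_add_le _ _).trans (add_le_add (hMf x) (hMg x))⟩
  intro s t hst
  set δ : ℝ := (t - s) / 3 with hδdef
  have hδ : 0 < δ := by rw [hδdef]; linarith
  set a : ℕ → ℝ := fun i => -Mf + i * δ with ha
  set n : ℕ := ⌈2 * Mf / δ⌉₊ + 1 with hn
  have han : Mf < a n := by
    have h1 : 2 * Mf / δ < (n : ℝ) := by
      have := Nat.le_ceil (2 * Mf / δ)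
      push_cast [hn]
      linarith
    have h2 : 2 * Mf < n * δ := by
      rwa [div_lt_iff₀ hδ] at h1
    simp only [ha]
    linarith
  choose A hAF hA1 hA2 using fun i : ℕ =>
    hf (a i - δ) (a i) (by linarith)
  choose B hBF hB1 hB2 using fun i : ℕ =>
    hg (t - a i - 2 * δ) (t - a i - δ) (by linarith)
  refine ⟨⋃ i ∈ Finset.range (n + 1), A i ∩ B i,
    biUnion_mem_F F hempty hunion _ (fun i => hinter _ (hAF i) _ (hBF i)) _, ?_, ?_⟩
  · intro x hx
    simp only [Set.mem_setOf_eq] at hx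
    classical
    set P : ℕ → Prop := fun k => a k ≤ f x with hP
    have hP0 : P 0 := by
      simp only [hP, ha, Nat.cast_zero, zero_mul, add_zero]
      have := abs_le.mp (hMf x)
      linarith
    set i : ℕ := Nat.findGreatest P n with hi
    have hPi : P i := Nat.findGreatest_spec (Nat.zero_le n) hP0
    have hile : i ≤ n := Nat.findGreatest_le n
    have hnotPn : ¬ P n := by
      simp only [hP, not_le]
      have := abs_le.mp (hMf x)
      linarith
    have hilt : i < n := lt_of_le_of_ne hile (fun h => hnotPn (h ▸ hPi))
    have hnotPsucc : ¬ P (i + 1) :=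
      Nat.findGreatest_is_greatest (Nat.lt_succ_self i) hilt
    have hfx : f x < a i + δ := by
      have : ¬ a (i + 1) ≤ f x := hnotPsucc
      push_neg at this
      have heq : a (i + 1) = a i + δ := by
        simp only [ha]; push_cast; ring
      linarith [heq ▸ this]
    refine Set.mem_biUnion (Finset.mem_range.mpr (Nat.lt_succ_of_lt hilt)) ⟨?_, ?_⟩
    · exact hA1 i hPi
    · apply hB1 i
      simp only [Set.mem_setOf_eq]
      linarith [hPi]
  · intro x hx
    simp only [Set.mem_iUnion] at hx
    obtain ⟨i, _, hxA, hxB⟩ := hx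
    have h1 := hA2 i hxA
    have h2 := hB2 i hxB
    simp only [Set.mem_setOf_eq] at h1 h2 ⊢
    have : 3 * δ = t - s := by rw [hδdef]; ring
    linarith
end

section
/- A setfunction φ on a set-algebra (J, B) can be written as the difference of two increasing (monotone with respect to inclusion) setfunctions if and only if φ has bounded variation, i.e., there exists K ∈ ℝ such that for every finite chain ∅ = X₀ ⊆ X₁ ⊆ … ⊆ Xₙ = J of sets in B, ∑ᵢ |φ(Xᵢ) − φ(Xᵢ₋₁)| ≤ K. -/
theorem stmt_1 {J : Type*} (B : Set (Set J))
    (hempty : ∅ ∈ B) (huniv : Set.univ ∈ B)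
    (hcompl : ∀ A ∈ B, Aᶜ ∈ B)
    (hunion : ∀ A ∈ B, ∀ C ∈ B, A ∪ C ∈ B)
    (hinter : ∀ A ∈ B, ∀ C ∈ B, A ∩ C ∈ B)
    (φ : Set J → ℝ) :
    (∃ μ ν : Set J → ℝ,
        (∀ X ∈ B, ∀ Y ∈ B, X ⊆ Y → μ X ≤ μ Y) ∧
        (∀ X ∈ B, ∀ Y ∈ B, X ⊆ Y → ν X ≤ ν Y) ∧
        (∀ X ∈ B, φ X = μ X - ν X)) ↔
    (∃ K : ℝ, ∀ (n : ℕ) (X : ℕ → Set J),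
        (∀ i ≤ n, X i ∈ B) → X 0 = ∅ → X n = Set.univ →
        (∀ i < n, X i ⊆ X (i + 1)) →
        ∑ i ∈ Finset.range n, |φ (X (i + 1)) - φ (X i)| ≤ K) := by
  constructor
  · rintro ⟨μ, ν, hμ, hν, hφ⟩
    refine ⟨(μ Set.univ - μ ∅) + (ν Set.univ - ν ∅), fun n X hB h0 hn hc => ?_⟩
    have key : ∀ i ∈ Finset.range n,
        |φ (X (i + 1)) - φ (X i)| ≤
          (μ (X (i + 1)) + ν (X (i + 1))) - (μ (X i) + ν (X i)) := by
      intro i hi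
      rw [Finset.mem_range] at hi
      have hi1 : X i ∈ B := hB i (Nat.le_of_lt hi)
      have hi2 : X (i + 1) ∈ B := hB (i + 1) hi
      have hm := hμ (X i) hi1 (X (i + 1)) hi2 (hc i hi)
      have hm' := hν (X i) hi1 (X (i + 1)) hi2 (hc i hi)
      rw [hφ _ hi1, hφ _ hi2, abs_le]
      constructor <;> linarith
    calc ∑ i ∈ Finset.range n, |φ (X (i + 1)) - φ (X i)|
        ≤ ∑ i ∈ Finset.range n,
            ((μ (X (i + 1)) + ν (X (i + 1))) - (μ (X i) + ν (X i))) :=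
          Finset.sum_le_sum key
      _ = (μ (X n) + ν (X n)) - (μ (X 0) + ν (X 0)) :=
          Finset.sum_range_sub (fun i => μ (X i) + ν (X i)) n
      _ = (μ Set.univ - μ ∅) + (ν Set.univ - ν ∅) := by rw [h0, hn]; ring
  · rintro ⟨K, hK⟩
    -- the set of variation sums along chains from ∅ to X
    set S : Set J → Set ℝ := fun X =>
      {s : ℝ | ∃ (n : ℕ) (C : ℕ → Set J),
        (∀ i ≤ n, C i ∈ B) ∧ C 0 = ∅ ∧ C n = X ∧ (∀ i < n, C i ⊆ C (i + 1)) ∧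
        s = ∑ i ∈ Finset.range n, |φ (C (i + 1)) - φ (C i)|} with hS
    -- extension of a chain by one more set
    have hext : ∀ X, ∀ Y ∈ B, X ⊆ Y → ∀ s ∈ S X, s + |φ Y - φ X| ∈ S Y := by
      intro X Y hY hXY s hs
      obtain ⟨n, C, h1, h2, h3, h4, h5⟩ := hs
      refine ⟨n + 1, fun i => if i ≤ n then C i else Y, ?_, ?_, ?_, ?_, ?_⟩
      · intro i hi
        by_cases h : i ≤ n
        · simpa [h] using h1 i h
        · simpa [h] using hY
      · simp [h2]
      · simp
      · intro i hi
        rcases Nat.lt_or_ge i n with h | h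
        · have h' : i + 1 ≤ n := h
          simpa [Nat.le_of_lt h, h'] using h4 i h
        · have hin : i = n := by omega
          subst hin
          simpa [h3] using hXY
      · rw [Finset.sum_range_succ]
        have heq : ∑ i ∈ Finset.range n,
            |φ (if i + 1 ≤ n then C (i + 1) else Y) - φ (if i ≤ n then C i else Y)|
            = ∑ i ∈ Finset.range n, |φ (C (i + 1)) - φ (C i)| := by
          refine Finset.sum_congr rfl fun i hi => ?_
          rw [Finset.mem_range] at hi
          have h' : i + 1 ≤ n := hi
          simp [Nat.le_of_lt hi, h']
        simp only [heq]
        have : ¬ (n + 1 ≤ n) := by omega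
        simp [this, h3, h5]
    -- nonemptiness
    have hne : ∀ X ∈ B, (S X).Nonempty := by
      intro X hX
      refine ⟨|φ X - φ ∅|, 1, fun i => if i = 0 then ∅ else X, ?_, ?_, ?_, ?_, ?_⟩
      · intro i hi
        by_cases h : i = 0 <;> simp [h, hempty, hX]
      · simp
      · simp
      · intro i hi
        have : i = 0 := by omega
        simp [this]
      · simp
    -- boundedness: every element of S X is ≤ K when X ∈ B
    have hbdd : ∀ X ∈ B, ∀ s ∈ S X, s ≤ K := by
      intro X hX s hs
      have h2 := hext X Set.univ huniv (Set.subset_univ X) s hs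
      obtain ⟨n, C, h1, h0, hn', hc, hsum⟩ := h2
      have := hK n C h1 h0 hn' hc
      have habs : (0:ℝ) ≤ |φ Set.univ - φ X| := abs_nonneg _
      linarith [hsum ▸ this]
    have hbdd' : ∀ X ∈ B, BddAbove (S X) := fun X hX => ⟨K, fun s hs => hbdd X hX s hs⟩
    set V : Set J → ℝ := fun X => sSup (S X) with hV
    -- key monotonicity estimate
    have hkey : ∀ X ∈ B, ∀ Y ∈ B, X ⊆ Y → V X + |φ Y - φ X| ≤ V Y := by
      intro X hX Y hY hXY
      have : V X ≤ V Y - |φ Y - φ X| := by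
        apply csSup_le (hne X hX)
        intro s hs
        have hmem := hext X Y hY hXY s hs
        have hle : s + |φ Y - φ X| ≤ V Y := le_csSup (hbdd' Y hY) hmem
        linarith
      linarith
    refine ⟨fun X => (V X + φ X) / 2, fun X => (V X - φ X) / 2, ?_, ?_, ?_⟩
    · intro X hX Y hY hXY
      have h1 := hkey X hX Y hY hXY
      have h2 : -(φ Y - φ X) ≤ |φ Y - φ X| := neg_le_abs _
      dsimp only
      linarith
    · intro X hX Y hY hXY
      have h1 := hkey X hX Y hY hXY
      have h2 : φ Y - φ X ≤ |φ Y - φ X| := le_abs_self _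
      dsimp only
      linarith
    · intro X hX
      ring
end

section
/- Every bounded submodular setfunction on a set-algebra has bounded variation: if φ : B → ℝ is submodular and bounded, then there is K ∈ ℝ such that for every finite chain ∅ = X₀ ⊆ X₁ ⊆ … ⊆ Xₙ = J in B, ∑ᵢ |φ(Xᵢ) − φ(Xᵢ₋₁)| ≤ K. In fact one may take K = 2 sup φ − φ(J) − φ(∅). -/
theorem stmt_2 {J : Type*} (B : Set (Set J))
    (hempty : ∅ ∈ B) (huniv : Set.univ ∈ B)
    (hcompl : ∀ A ∈ B, Aᶜ ∈ B)
    (hunion : ∀ A ∈ B, ∀ C ∈ B, A ∪ C ∈ B)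
    (hinter : ∀ A ∈ B, ∀ C ∈ B, A ∩ C ∈ B)
    (φ : Set J → ℝ)
    (hbdd : ∃ M : ℝ, ∀ X ∈ B, |φ X| ≤ M)
    (hsub : ∀ X ∈ B, ∀ Y ∈ B, φ (X ∪ Y) + φ (X ∩ Y) ≤ φ X + φ Y) :
    (∃ K : ℝ, ∀ (n : ℕ) (X : ℕ → Set J),
        (∀ i ≤ n, X i ∈ B) → X 0 = ∅ → X n = Set.univ →
        (∀ i < n, X i ⊆ X (i + 1)) →
        ∑ i ∈ Finset.range n, |φ (X (i + 1)) - φ (X i)| ≤ K) ∧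
    (∀ (n : ℕ) (X : ℕ → Set J),
        (∀ i ≤ n, X i ∈ B) → X 0 = ∅ → X n = Set.univ →
        (∀ i < n, X i ⊆ X (i + 1)) →
        ∑ i ∈ Finset.range n, |φ (X (i + 1)) - φ (X i)| ≤
          2 * sSup (φ '' B) - φ Set.univ - φ ∅) := by
  obtain ⟨M, hM⟩ := hbdd
  have hbdda : BddAbove (φ '' B) := ⟨M, by rintro _ ⟨A, hA, rfl⟩; exact (abs_le.mp (hM A hA)).2⟩
  have main : ∀ (n : ℕ) (X : ℕ → Set J),
      (∀ i ≤ n, X i ∈ B) → X 0 = ∅ → X n = Set.univ →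
      (∀ i < n, X i ⊆ X (i + 1)) →
      ∑ i ∈ Finset.range n, |φ (X (i + 1)) - φ (X i)| ≤
        2 * sSup (φ '' B) - φ Set.univ - φ ∅ := by
    intro n X hX h0 hn hchain
    -- key induction: positive variation bounded by φ S for some S ∈ B
    have key : ∀ m, m ≤ n → ∃ S ∈ B, S ⊆ X m ∧
        φ ∅ + ∑ i ∈ Finset.range m, max (φ (X (i + 1)) - φ (X i)) 0 ≤ φ S := by
      intro m
      induction m with
      | zero =>
        intro _
        exact ⟨∅, hempty, by rw [h0], by simp⟩
      | succ m ih =>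
        intro hm1
        obtain ⟨S, hSB, hSsub, hSphi⟩ := ih (Nat.le_of_succ_le hm1)
        have hmlt : m < n := hm1
        have hsub1 : X m ⊆ X (m + 1) := hchain m hmlt
        by_cases hpos : φ (X (m + 1)) - φ (X m) ≤ 0
        · refine ⟨S, hSB, hSsub.trans hsub1, ?_⟩
          rw [Finset.sum_range_succ, max_eq_right hpos]
          simpa using hSphi
        · push_neg at hpos
          set D : Set J := X (m + 1) ∩ (X m)ᶜ with hD
          have hDB : D ∈ B := hinter _ (hX _ hm1) _ (hcompl _ (hX m (Nat.le_of_succ_le hm1)))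
          have hSDB : S ∪ D ∈ B := hunion _ hSB _ hDB
          have hU : (S ∪ D) ∪ X m = X (m + 1) := by
            ext x
            simp only [hD, Set.mem_union, Set.mem_inter_iff, Set.mem_compl_iff]
            constructor
            · rintro ((h | ⟨h, _⟩) | h)
              · exact hsub1 (hSsub h)
              · exact h
              · exact hsub1 h
            · intro h
              by_cases hx : x ∈ X m
              · exact Or.inr hx
              · exact Or.inl (Or.inr ⟨h, hx⟩)
          have hI : (S ∪ D) ∩ X m = S := by
            ext x
            simp only [hD, Set.mem_union, Set.mem_inter_iff, Set.mem_compl_iff]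
            constructor
            · rintro ⟨h | ⟨_, hc⟩, hm⟩
              · exact h
              · exact absurd hm hc
            · intro h
              exact ⟨Or.inl h, hSsub h⟩
          have hkey := hsub (S ∪ D) hSDB (X m) (hX m (Nat.le_of_succ_le hm1))
          rw [hU, hI] at hkey
          refine ⟨S ∪ D, hSDB, ?_, ?_⟩
          · apply Set.union_subset (hSsub.trans hsub1)
            exact fun x hx => hx.1
          · rw [Finset.sum_range_succ, max_eq_left hpos.le]
            linarith
    obtain ⟨S, hSB, _, hSphi⟩ := key n le_rfl
    have hSle : φ S ≤ sSup (φ '' B) := le_csSup hbdda ⟨S, hSB, rfl⟩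
    have hsum : ∑ i ∈ Finset.range n, max (φ (X (i + 1)) - φ (X i)) 0 ≤
        sSup (φ '' B) - φ ∅ := by linarith
    have htel : ∑ i ∈ Finset.range n, (φ (X (i + 1)) - φ (X i)) = φ Set.univ - φ ∅ := by
      rw [Finset.sum_range_sub (fun i => φ (X i)), hn, h0]
    have habs : ∀ i, |φ (X (i + 1)) - φ (X i)| =
        2 * max (φ (X (i + 1)) - φ (X i)) 0 - (φ (X (i + 1)) - φ (X i)) := by
      intro i
      rcases le_or_gt (φ (X (i + 1)) - φ (X i)) 0 with h | h
      · rw [max_eq_right h, abs_of_nonpos h]; ring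
      · rw [max_eq_left h.le, abs_of_pos h]; ring
    calc ∑ i ∈ Finset.range n, |φ (X (i + 1)) - φ (X i)|
        = 2 * (∑ i ∈ Finset.range n, max (φ (X (i + 1)) - φ (X i)) 0) -
            ∑ i ∈ Finset.range n, (φ (X (i + 1)) - φ (X i)) := by
          rw [Finset.mul_sum, ← Finset.sum_sub_distrib]
          exact Finset.sum_congr rfl fun i _ => habs i
      _ ≤ 2 * sSup (φ '' B) - φ Set.univ - φ ∅ := by
          rw [htel]; linarith
  exact ⟨⟨2 * sSup (φ '' B) - φ Set.univ - φ ∅, main⟩, main⟩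
end

section
/- Let φ be a bounded submodular setfunction on a set-algebra (J, B) with φ(∅) = 0. Then φ^{ls}, defined by φ^{ls}(X) = sup{φ(Y) : Y ∈ B, Y ⊆ X}, is increasing and subadditive, and the difference φ − φ^{ls} is decreasing and subadditive. -/
theorem stmt_3 {J : Type*} (B : Set (Set J))
    (hempty : ∅ ∈ B) (huniv : Set.univ ∈ B)
    (hcompl : ∀ A ∈ B, Aᶜ ∈ B)
    (hunion : ∀ A ∈ B, ∀ C ∈ B, A ∪ C ∈ B)
    (hinter : ∀ A ∈ B, ∀ C ∈ B, A ∩ C ∈ B)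
    (φ : Set J → ℝ)
    (hbdd : ∃ M : ℝ, ∀ X ∈ B, |φ X| ≤ M)
    (hsub : ∀ X ∈ B, ∀ Y ∈ B, φ (X ∪ Y) + φ (X ∩ Y) ≤ φ X + φ Y)
    (h0 : φ ∅ = 0)
    (ls : Set J → ℝ)
    (hls : ∀ X, ls X = sSup {r | ∃ Y ∈ B, Y ⊆ X ∧ r = φ Y}) :
    (∀ X ∈ B, ∀ Y ∈ B, X ⊆ Y → ls X ≤ ls Y) ∧
    (∀ X ∈ B, ∀ Y ∈ B, Disjoint X Y → ls (X ∪ Y) ≤ ls X + ls Y) ∧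
    (∀ X ∈ B, ∀ Y ∈ B, X ⊆ Y → φ Y - ls Y ≤ φ X - ls X) ∧
    (∀ X ∈ B, ∀ Y ∈ B, Disjoint X Y →
      φ (X ∪ Y) - ls (X ∪ Y) ≤ (φ X - ls X) + (φ Y - ls Y)) := by
  obtain ⟨M, hM⟩ := hbdd
  have hne : ∀ X : Set J, ({r | ∃ Y ∈ B, Y ⊆ X ∧ r = φ Y} : Set ℝ).Nonempty :=
    fun X => ⟨φ ∅, ∅, hempty, Set.empty_subset X, rfl⟩
  have hbd : ∀ X : Set J, BddAbove ({r | ∃ Y ∈ B, Y ⊆ X ∧ r = φ Y} : Set ℝ) := by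
    intro X
    refine ⟨M, ?_⟩
    rintro r ⟨Y, hY, -, rfl⟩
    exact (abs_le.1 (hM Y hY)).2
  have hle : ∀ (X : Set J) (c : ℝ), (∀ Z ∈ B, Z ⊆ X → φ Z ≤ c) → ls X ≤ c := by
    intro X c h
    rw [hls]
    refine csSup_le (hne X) ?_
    rintro r ⟨Y, hY, hYX, rfl⟩
    exact h Y hY hYX
  have hge : ∀ (X : Set J), ∀ Z ∈ B, Z ⊆ X → φ Z ≤ ls X := by
    intro X Z hZ hZX
    rw [hls]
    exact le_csSup (hbd X) ⟨Z, hZ, hZX, rfl⟩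
  refine ⟨?_, ?_, ?_, ?_⟩
  · intro X _ Y _ hXY
    exact hle X (ls Y) (fun Z hZ hZX => hge Y Z hZ (hZX.trans hXY))
  · intro X hX Y hY hd
    refine hle _ _ ?_
    intro Z hZ hZU
    have h1 := hsub (Z ∩ X) (hinter Z hZ X hX) (Z ∩ Y) (hinter Z hZ Y hY)
    have e1 : (Z ∩ X) ∪ (Z ∩ Y) = Z := by
      rw [← Set.inter_union_distrib_left]
      exact Set.inter_eq_left.2 hZU
    have e2 : (Z ∩ X) ∩ (Z ∩ Y) = (∅ : Set J) := by
      have hdXY : X ∩ Y = ∅ := Set.disjoint_iff_inter_eq_empty.1 hd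
      ext x
      simp only [Set.mem_inter_iff, Set.mem_empty_iff_false, iff_false]
      rintro ⟨⟨-, hx⟩, ⟨-, hy⟩⟩
      have : x ∈ X ∩ Y := ⟨hx, hy⟩
      rw [hdXY] at this
      exact this
    rw [e1, e2, h0] at h1
    have h2 := hge X (Z ∩ X) (hinter Z hZ X hX) Set.inter_subset_right
    have h3 := hge Y (Z ∩ Y) (hinter Z hZ Y hY) Set.inter_subset_right
    linarith
  · intro X hX Y hY hXY
    have key : ls X ≤ φ X - φ Y + ls Y := by
      refine hle _ _ ?_
      intro Z hZ hZX
      set W : Set J := Z ∪ (Y ∩ Xᶜ) with hW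
      have hWB : W ∈ B := hunion Z hZ _ (hinter Y hY Xᶜ (hcompl X hX))
      have h1 := hsub X hX W hWB
      have e1 : X ∪ W = Y := by
        ext x
        simp only [hW, Set.mem_union, Set.mem_inter_iff, Set.mem_compl_iff]
        constructor
        · rintro (h | h | ⟨h, -⟩)
          · exact hXY h
          · exact hXY (hZX h)
          · exact h
        · intro h
          by_cases hx : x ∈ X
          · exact Or.inl hx
          · exact Or.inr (Or.inr ⟨h, hx⟩)
      have e2 : X ∩ W = Z := by
        ext x
        simp only [hW, Set.mem_inter_iff, Set.mem_union, Set.mem_compl_iff]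
        constructor
        · rintro ⟨hx, h | ⟨-, h⟩⟩
          · exact h
          · exact absurd hx h
        · intro h
          exact ⟨hZX h, Or.inl h⟩
      rw [e1, e2] at h1
      have h2 := hge Y W hWB (by rw [← e1]; exact Set.subset_union_right)
      linarith
    linarith
  · intro X hX Y hY hd
    have hdXY : X ∩ Y = ∅ := Set.disjoint_iff_inter_eq_empty.1 hd
    have key : ls X + ls Y ≤ φ X + φ Y + ls (X ∪ Y) - φ (X ∪ Y) := by
      have step : ls X ≤ φ X + φ Y + ls (X ∪ Y) - φ (X ∪ Y) - ls Y := by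
        refine hle _ _ ?_
        intro Z hZ hZX
        have step2 : ls Y ≤ φ X + φ Y + ls (X ∪ Y) - φ (X ∪ Y) - φ Z := by
          refine hle _ _ ?_
          intro W hW hWY
          have h1 := hsub X hX (Z ∪ Y) (hunion Z hZ Y hY)
          have e1 : X ∪ (Z ∪ Y) = X ∪ Y := by
            rw [← Set.union_assoc, Set.union_eq_left.2 hZX]
          have e2 : X ∩ (Z ∪ Y) = Z := by
            rw [Set.inter_union_distrib_left, Set.inter_eq_right.2 hZX, hdXY,
              Set.union_empty]
          rw [e1, e2] at h1
          have h2 := hsub Y hY (Z ∪ W) (hunion Z hZ W hW)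
          have e3 : Y ∪ (Z ∪ W) = Z ∪ Y := by
            ext x
            simp only [Set.mem_union]
            constructor
            · rintro (h | h | h)
              · exact Or.inr h
              · exact Or.inl h
              · exact Or.inr (hWY h)
            · rintro (h | h)
              · exact Or.inr (Or.inl h)
              · exact Or.inl h
          have e4 : Y ∩ (Z ∪ W) = W := by
            ext x
            simp only [Set.mem_inter_iff, Set.mem_union]
            constructor
            · rintro ⟨hy, (hz | hw)⟩
              · have : x ∈ X ∩ Y := ⟨hZX hz, hy⟩
                rw [hdXY] at this
                exact absurd this (Set.notMem_empty x)
              · exact hw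
            · intro h
              exact ⟨hWY h, Or.inr h⟩
          rw [e3, e4] at h2
          have h3 := hge (X ∪ Y) (Z ∪ W) (hunion Z hZ W hW)
            (Set.union_subset_union hZX hWY)
          linarith
        linarith
      linarith
    linarith
end

section
/- Let F be a lattice family of subsets of J and φ : F → ℝ submodular. Then the setfunction φ^{li} : 2^J → ℝ defined by φ^{li}(X) = inf{φ(Y) : Y ∈ F, Y ⊆ X}, and the setfunction φ^{ui}(X) = inf{φ(Y) : Y ∈ F, Y ⊇ X}, are both submodular on 2^J (assuming the infima are finite, e.g. φ bounded and ∅, J ∈ F). -/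
theorem stmt_4 {J : Type*} (F : Set (Set J))
    (hempty : ∅ ∈ F) (huniv : Set.univ ∈ F)
    (hunion : ∀ A ∈ F, ∀ C ∈ F, A ∪ C ∈ F)
    (hinter : ∀ A ∈ F, ∀ C ∈ F, A ∩ C ∈ F)
    (φ : Set J → ℝ)
    (hbdd : ∃ M : ℝ, ∀ A ∈ F, |φ A| ≤ M)
    (hsub : ∀ U ∈ F, ∀ V ∈ F, φ (U ∪ V) + φ (U ∩ V) ≤ φ U + φ V)
    (li ui : Set J → ℝ)
    (hli : ∀ X : Set J, li X = sInf {r | ∃ Y ∈ F, Y ⊆ X ∧ r = φ Y})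
    (hui : ∀ X : Set J, ui X = sInf {r | ∃ Y ∈ F, X ⊆ Y ∧ r = φ Y}) :
    (∀ X Y : Set J, li (X ∪ Y) + li (X ∩ Y) ≤ li X + li Y) ∧
    (∀ X Y : Set J, ui (X ∪ Y) + ui (X ∩ Y) ≤ ui X + ui Y) := by
  obtain ⟨M, hM⟩ := hbdd
  have hbd : ∀ X : Set J, BddBelow {r | ∃ Y ∈ F, Y ⊆ X ∧ r = φ Y} := by
    intro X
    refine ⟨-M, ?_⟩
    rintro r ⟨A, hA, -, rfl⟩
    linarith [(abs_le.mp (hM A hA)).1]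
  have hbd' : ∀ X : Set J, BddBelow {r | ∃ Y ∈ F, X ⊆ Y ∧ r = φ Y} := by
    intro X
    refine ⟨-M, ?_⟩
    rintro r ⟨A, hA, -, rfl⟩
    linarith [(abs_le.mp (hM A hA)).1]
  constructor
  · intro X Y
    have key : ∀ a ∈ {r | ∃ Z ∈ F, Z ⊆ X ∧ r = φ Z},
        ∀ b ∈ {r | ∃ Z ∈ F, Z ⊆ Y ∧ r = φ Z},
        li (X ∪ Y) + li (X ∩ Y) ≤ a + b := by
      rintro a ⟨A, hA, hAX, rfl⟩ b ⟨B, hB, hBY, rfl⟩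
      have h1 : li (X ∪ Y) ≤ φ (A ∪ B) := by
        rw [hli]
        exact csInf_le (hbd _) ⟨A ∪ B, hunion A hA B hB,
          Set.union_subset_union hAX hBY, rfl⟩
      have h2 : li (X ∩ Y) ≤ φ (A ∩ B) := by
        rw [hli]
        exact csInf_le (hbd _) ⟨A ∩ B, hinter A hA B hB,
          Set.inter_subset_inter hAX hBY, rfl⟩
      linarith [hsub A hA B hB]
    have h2 : li (X ∪ Y) + li (X ∩ Y) - li Y ≤ li X := by
      rw [hli X]
      refine le_csInf ⟨φ ∅, ∅, hempty, Set.empty_subset X, rfl⟩ ?_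
      intro a ha
      have h3 : li (X ∪ Y) + li (X ∩ Y) - a ≤ li Y := by
        rw [hli Y]
        refine le_csInf ⟨φ ∅, ∅, hempty, Set.empty_subset Y, rfl⟩ ?_
        intro b hb
        linarith [key a ha b hb]
      linarith
    linarith
  · intro X Y
    have key : ∀ a ∈ {r | ∃ Z ∈ F, X ⊆ Z ∧ r = φ Z},
        ∀ b ∈ {r | ∃ Z ∈ F, Y ⊆ Z ∧ r = φ Z},
        ui (X ∪ Y) + ui (X ∩ Y) ≤ a + b := by
      rintro a ⟨A, hA, hAX, rfl⟩ b ⟨B, hB, hBY, rfl⟩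
      have h1 : ui (X ∪ Y) ≤ φ (A ∪ B) := by
        rw [hui]
        exact csInf_le (hbd' _) ⟨A ∪ B, hunion A hA B hB,
          Set.union_subset_union hAX hBY, rfl⟩
      have h2 : ui (X ∩ Y) ≤ φ (A ∩ B) := by
        rw [hui]
        exact csInf_le (hbd' _) ⟨A ∩ B, hinter A hA B hB,
          Set.inter_subset_inter hAX hBY, rfl⟩
      linarith [hsub A hA B hB]
    have h2 : ui (X ∪ Y) + ui (X ∩ Y) - ui Y ≤ ui X := by
      rw [hui X]
      refine le_csInf ⟨φ Set.univ, Set.univ, huniv, Set.subset_univ X, rfl⟩ ?_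
      intro a ha
      have h3 : ui (X ∪ Y) + ui (X ∩ Y) - a ≤ ui Y := by
        rw [hui Y]
        refine le_csInf ⟨φ Set.univ, Set.univ, huniv, Set.subset_univ Y, rfl⟩ ?_
        intro b hb
        linarith [key a ha b hb]
      linarith
    linarith
end

section
/- Let φ : B → ℝ be a submodular setfunction on a set-algebra (J, B) and μ : B → ℝ a modular setfunction (φ and μ nonnegative). Then the setfunction (φ ∧ μ)(X) = inf{φ(Y) + μ(X \ Y) : Y ∈ B, Y ⊆ X} is submodular; moreover, if φ and μ are increasing, then φ ∧ μ is increasing. -/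
theorem stmt_5 {J : Type*} (B : Set (Set J))
    (hempty : ∅ ∈ B) (huniv : Set.univ ∈ B)
    (hcompl : ∀ A ∈ B, Aᶜ ∈ B)
    (hunion : ∀ A ∈ B, ∀ C ∈ B, A ∪ C ∈ B)
    (hinter : ∀ A ∈ B, ∀ C ∈ B, A ∩ C ∈ B)
    (φ μ : Set J → ℝ)
    (hφpos : ∀ X ∈ B, 0 ≤ φ X) (hμpos : ∀ X ∈ B, 0 ≤ μ X)
    (hsub : ∀ X ∈ B, ∀ Y ∈ B, φ (X ∪ Y) + φ (X ∩ Y) ≤ φ X + φ Y)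
    (hmod : ∀ X ∈ B, ∀ Y ∈ B, μ (X ∪ Y) + μ (X ∩ Y) = μ X + μ Y)
    (meet : Set J → ℝ)
    (hmeet : ∀ X, meet X = sInf {r | ∃ Y ∈ B, Y ⊆ X ∧ r = φ Y + μ (X \ Y)}) :
    (∀ X ∈ B, ∀ Y ∈ B, meet (X ∪ Y) + meet (X ∩ Y) ≤ meet X + meet Y) ∧
    ((∀ X ∈ B, ∀ Y ∈ B, X ⊆ Y → φ X ≤ φ Y) →
      (∀ X ∈ B, ∀ Y ∈ B, X ⊆ Y → μ X ≤ μ Y) →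
      (∀ X ∈ B, ∀ Y ∈ B, X ⊆ Y → meet X ≤ meet Y)) := by
  classical
  have hdiff : ∀ A ∈ B, ∀ C ∈ B, A \ C ∈ B := by
    intro A hA C hC
    have := hinter A hA Cᶜ (hcompl C hC)
    simpa [Set.diff_eq] using this
  have hkey : ∀ S ∈ B, ∀ T ∈ B, T ⊆ S → μ T + μ (S \ T) = μ S + μ ∅ := by
    intro S hS T hT hTS
    have h := hmod T hT (S \ T) (hdiff S hS T hT)
    rw [Set.union_diff_cancel hTS] at h
    have he : T ∩ (S \ T) = ∅ := by
      ext x; simp [Set.mem_diff]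
    rw [he] at h
    linarith
  have hbdd : ∀ X ∈ B, BddBelow {r | ∃ Y ∈ B, Y ⊆ X ∧ r = φ Y + μ (X \ Y)} := by
    intro X hX
    refine ⟨0, ?_⟩
    rintro r ⟨Y, hY, hYX, rfl⟩
    have h1 := hφpos Y hY
    have h2 := hμpos (X \ Y) (hdiff X hX Y hY)
    linarith
  have hne : ∀ X : Set J, {r | ∃ Y ∈ B, Y ⊆ X ∧ r = φ Y + μ (X \ Y)}.Nonempty := by
    intro X
    exact ⟨φ ∅ + μ (X \ ∅), ∅, hempty, Set.empty_subset X, rfl⟩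
  have hle : ∀ X ∈ B, ∀ Y ∈ B, Y ⊆ X → meet X ≤ φ Y + μ (X \ Y) := by
    intro X hX Y hY hYX
    rw [hmeet]
    exact csInf_le (hbdd X hX) ⟨Y, hY, hYX, rfl⟩
  constructor
  · intro X hX Y hY
    have h1 : ∀ r ∈ {r | ∃ A ∈ B, A ⊆ X ∧ r = φ A + μ (X \ A)},
        ∀ s ∈ {r | ∃ C ∈ B, C ⊆ Y ∧ r = φ C + μ (Y \ C)},
        meet (X ∪ Y) + meet (X ∩ Y) ≤ r + s := by
      rintro r ⟨A, hA, hAX, rfl⟩ s ⟨C, hC, hCY, rfl⟩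
      have hAC : A ∪ C ∈ B := hunion A hA C hC
      have hACi : A ∩ C ∈ B := hinter A hA C hC
      have m1 := hle (X ∪ Y) (hunion X hX Y hY) (A ∪ C) hAC
        (Set.union_subset_union hAX hCY)
      have m2 := hle (X ∩ Y) (hinter X hX Y hY) (A ∩ C) hACi
        (Set.inter_subset_inter hAX hCY)
      have k1 := hkey (X ∪ Y) (hunion X hX Y hY) (A ∪ C) hAC
        (Set.union_subset_union hAX hCY)
      have k2 := hkey (X ∩ Y) (hinter X hX Y hY) (A ∩ C) hACi
        (Set.inter_subset_inter hAX hCY)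
      have k3 := hkey X hX A hA hAX
      have k4 := hkey Y hY C hC hCY
      have s1 := hsub A hA C hC
      have mμ1 := hmod A hA C hC
      have mμ2 := hmod X hX Y hY
      linarith
    rw [hmeet X, hmeet Y]
    rw [← sub_le_iff_le_add]
    apply le_csInf (hne X)
    intro r hr
    rw [sub_le_comm]
    apply le_csInf (hne Y)
    intro s hs
    have := h1 r hr s hs
    linarith
  · intro hφmono hμmono X hX Y hY hXY
    rw [hmeet Y]
    apply le_csInf (hne Y)
    rintro s ⟨A, hA, hAY, rfl⟩
    have hAX : A ∩ X ∈ B := hinter A hA X hX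
    have h1 : meet X ≤ φ (A ∩ X) + μ (X \ (A ∩ X)) :=
      hle X hX (A ∩ X) hAX Set.inter_subset_right
    have h2 : φ (A ∩ X) ≤ φ A := hφmono (A ∩ X) hAX A hA Set.inter_subset_left
    have heq : X \ (A ∩ X) = X \ A := by
      ext x; simp [Set.mem_diff]
    have h3 : μ (X \ A) ≤ μ (Y \ A) :=
      hμmono (X \ A) (hdiff X hX A hA) (Y \ A) (hdiff Y hY A hA)
        (Set.diff_subset_diff_left hXY)
    rw [heq] at h1
    linarith
end

section
/- Let φ, ψ be submodular setfunctions on a set-algebra (J, B) forming a diverging pair, i.e., φ − ψ is increasing with respect to inclusion. Then min(φ, ψ), defined by X ↦ min(φ(X), ψ(X)), is submodular. -/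
theorem stmt_7 {J : Type*} (B : Set (Set J))
    (hempty : ∅ ∈ B) (huniv : Set.univ ∈ B)
    (hcompl : ∀ A ∈ B, Aᶜ ∈ B)
    (hunion : ∀ A ∈ B, ∀ C ∈ B, A ∪ C ∈ B)
    (hinter : ∀ A ∈ B, ∀ C ∈ B, A ∩ C ∈ B)
    (φ ψ : Set J → ℝ)
    (hφ : ∀ X ∈ B, ∀ Y ∈ B, φ (X ∪ Y) + φ (X ∩ Y) ≤ φ X + φ Y)
    (hψ : ∀ X ∈ B, ∀ Y ∈ B, ψ (X ∪ Y) + ψ (X ∩ Y) ≤ ψ X + ψ Y)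
    (hdiv : ∀ X ∈ B, ∀ Y ∈ B, X ⊆ Y → φ X - ψ X ≤ φ Y - ψ Y) :
    ∀ X ∈ B, ∀ Y ∈ B,
      min (φ (X ∪ Y)) (ψ (X ∪ Y)) + min (φ (X ∩ Y)) (ψ (X ∩ Y)) ≤
        min (φ X) (ψ X) + min (φ Y) (ψ Y) := by
  intro X hX Y hY
  have hXY : X ∩ Y ∈ B := hinter X hX Y hY
  have h1 : min (φ (X ∪ Y)) (ψ (X ∪ Y)) ≤ φ (X ∪ Y) := min_le_left _ _
  have h2 : min (φ (X ∪ Y)) (ψ (X ∪ Y)) ≤ ψ (X ∪ Y) := min_le_right _ _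
  have h3 : min (φ (X ∩ Y)) (ψ (X ∩ Y)) ≤ φ (X ∩ Y) := min_le_left _ _
  have h4 : min (φ (X ∩ Y)) (ψ (X ∩ Y)) ≤ ψ (X ∩ Y) := min_le_right _ _
  rcases min_cases (φ X) (ψ X) with ⟨eX, _⟩ | ⟨eX, _⟩ <;>
    rcases min_cases (φ Y) (ψ Y) with ⟨eY, _⟩ | ⟨eY, _⟩ <;> rw [eX, eY]
  · linarith [hφ X hX Y hY]
  · -- min X = φ X, min Y = ψ Y; use X∩Y ⊆ X
    have hd := hdiv (X ∩ Y) hXY X hX Set.inter_subset_left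
    linarith [hψ X hX Y hY]
  · -- min X = ψ X, min Y = φ Y; use X∩Y ⊆ Y
    have hd := hdiv (X ∩ Y) hXY Y hY Set.inter_subset_right
    linarith [hψ X hX Y hY]
  · linarith [hψ X hX Y hY]
end

section
/- Let E be a finite set and f : 2^E → ℝ be an increasing submodular setfunction with f(∅) < 0. Define f∘(U) = min over all partitions {X₁,…,Xₙ} of U into nonempty subsets of ∑ᵢ max(f(Xᵢ), 0), with f∘(∅) = 0. Then f∘ is submodular. (Dilworth truncation / positive part.) -/
open Finset

namespace Stmt8Aux

variable {E : Type*}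

def sU (P : Finset (Set E)) : Set E := ⋃ A ∈ P, A

lemma mem_sU {P : Finset (Set E)} {x : E} : x ∈ sU P ↔ ∃ A ∈ P, x ∈ A := by
  simp [sU]

lemma sU_empty : sU (∅ : Finset (Set E)) = ∅ := by simp [sU]

lemma subset_sU {P : Finset (Set E)} {A : Set E} (h : A ∈ P) : A ⊆ sU P :=
  fun x hx => mem_sU.mpr ⟨A, h, hx⟩

lemma sU_insert {P : Finset (Set E)} {A : Set E} [DecidableEq (Set E)] :
    sU (insert A P) = A ∪ sU P := by
  ext x; simp [mem_sU]

lemma sU_union {P Q : Finset (Set E)} [DecidableEq (Set E)] :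
    sU (P ∪ Q) = sU P ∪ sU Q := by
  ext x
  simp only [mem_sU, Set.mem_union, Finset.mem_union]
  constructor
  · rintro ⟨A, hA | hA, hx⟩
    · exact Or.inl ⟨A, hA, hx⟩
    · exact Or.inr ⟨A, hA, hx⟩
  · rintro (⟨A, hA, hx⟩ | ⟨A, hA, hx⟩)
    · exact ⟨A, Or.inl hA, hx⟩
    · exact ⟨A, Or.inr hA, hx⟩

lemma sU_erase_eq {Q : Finset (Set E)} {B : Set E} [DecidableEq (Set E)] (h : B ∈ Q) :
    sU Q = B ∪ sU (Q.erase B) := by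
  ext x
  simp only [mem_sU, Set.mem_union, Finset.mem_erase]
  constructor
  · rintro ⟨A, hA, hx⟩
    by_cases hAB : A = B
    · left; exact hAB ▸ hx
    · right; exact ⟨A, ⟨hAB, hA⟩, hx⟩
  · rintro (hx | ⟨A, ⟨_, hA⟩, hx⟩)
    · exact ⟨B, h, hx⟩
    · exact ⟨A, hA, hx⟩

lemma sU_sdiff_union {P T : Finset (Set E)} [DecidableEq (Set E)] (h : T ⊆ P) :
    sU T ∪ sU (P \ T) = sU P := by
  rw [← sU_union, Finset.union_sdiff_of_subset h]

/-- Telescoping submodularity -/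
lemma tele (f : Set E → ℝ)
    (hsub : ∀ X Y : Set E, f (X ∪ Y) + f (X ∩ Y) ≤ f X + f Y)
    (T : Finset (Set E)) (hd : ∀ A ∈ T, ∀ A' ∈ T, A ≠ A' → A ∩ A' = ∅) (B : Set E) :
    f (B ∪ sU T) + ∑ A ∈ T, f (A ∩ B) ≤ f B + ∑ A ∈ T, f A := by
  classical
  induction T using Finset.induction_on generalizing B with
  | empty => simp [sU_empty]
  | insert _ _ hA0 =>
    rename_i A0 T ih
    have hd' : ∀ A ∈ T, ∀ A' ∈ T, A ≠ A' → A ∩ A' = ∅ := by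
      intro A hA A' hA' hne
      exact hd A (mem_insert_of_mem hA) A' (mem_insert_of_mem hA') hne
    have hA0T : ∀ A ∈ T, A ∩ A0 = ∅ := by
      intro A hA
      exact hd A (mem_insert_of_mem hA) A0 (mem_insert_self _ _)
        (fun h => hA0 (h ▸ hA))
    have ih' := ih hd' (B ∪ A0)
    have hrw : ∀ A ∈ T, f (A ∩ (B ∪ A0)) = f (A ∩ B) := by
      intro A hA
      rw [Set.inter_union_distrib_left, hA0T A hA, Set.union_empty]
    rw [Finset.sum_congr rfl hrw] at ih'
    have hs := hsub A0 B
    have he : B ∪ sU (insert A0 T) = (B ∪ A0) ∪ sU T := by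
      rw [sU_insert]; ext x; simp; tauto
    rw [Finset.sum_insert hA0, Finset.sum_insert hA0, he]
    rw [Set.union_comm A0 B] at hs
    linarith



/-- The core uncrossing lemma. -/
lemma CL (f : Set E → ℝ)
    (hsub : ∀ X Y : Set E, f (X ∪ Y) + f (X ∩ Y) ≤ f X + f Y) :
    ∀ (n : ℕ) (Q P : Finset (Set E)), Q.card = n →
    (∀ A ∈ P, A ≠ (∅ : Set E)) → (∀ B ∈ Q, B ≠ (∅ : Set E)) →
    (∀ A ∈ P, ∀ A' ∈ P, A ≠ A' → A ∩ A' = ∅) →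
    (∀ B ∈ Q, ∀ B' ∈ Q, B ≠ B' → B ∩ B' = ∅) →
    ∃ R S : Finset (Set E),
      (∀ A ∈ R, A ≠ (∅ : Set E)) ∧ (∀ A ∈ R, ∀ A' ∈ R, A ≠ A' → A ∩ A' = ∅) ∧
      sU R = sU P ∪ sU Q ∧
      (∀ W ∈ R, ∃ D, (D ∈ P ∨ D ∈ Q) ∧ D ⊆ W) ∧
      (∀ J ∈ S, J ≠ (∅ : Set E)) ∧ (∀ J ∈ S, ∀ J' ∈ S, J ≠ J' → J ∩ J' = ∅) ∧
      sU S = sU P ∩ sU Q ∧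
      (∀ J ∈ S, ∃ B ∈ Q, J ⊆ B) ∧
      ∑ A ∈ R, f A + ∑ A ∈ S, f A ≤ ∑ A ∈ P, f A + ∑ A ∈ Q, f A := by
  classical
  intro n
  induction n with
  | zero =>
    intro Q P hQcard hPne hQne hPd hQd
    have hQ : Q = ∅ := Finset.card_eq_zero.mp hQcard
    subst hQ
    refine ⟨P, ∅, hPne, hPd, by simp [sU_empty], ?_, by simp, by simp, by simp [sU_empty], by simp, by simp⟩
    exact fun W hW => ⟨W, Or.inl hW, subset_rfl⟩
  | succ n ih =>
    intro Q P hQcard hPne hQne hPd hQd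
    have hQne' : Q.Nonempty := Finset.card_pos.mp (by omega)
    obtain ⟨B, hB⟩ := hQne'
    set Q' := Q.erase B with hQ'def
    have hQ'card : Q'.card = n := by
      rw [hQ'def, Finset.card_erase_of_mem hB]; omega
    have hQ'sub : Q' ⊆ Q := Finset.erase_subset _ _
    have hQ'ne : ∀ B' ∈ Q', B' ≠ (∅ : Set E) := fun B' h => hQne B' (hQ'sub h)
    have hQ'd : ∀ B' ∈ Q', ∀ B'' ∈ Q', B' ≠ B'' → B' ∩ B'' = ∅ :=
      fun B' h B'' h' => hQd B' (hQ'sub h) B'' (hQ'sub h')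
    have hBQ' : B ∩ sU Q' = ∅ := by
      ext x
      simp only [Set.mem_inter_iff, mem_sU, Set.mem_empty_iff_false, iff_false, not_and]
      rintro hxB ⟨B', hB', hx⟩
      have hne : B ≠ B' := fun h => (Finset.mem_erase.mp hB').1 h.symm
      have := hQd B hB B' (hQ'sub hB') hne
      exact absurd (Set.mem_inter hxB hx) (by rw [this]; exact id)
    have hsUQ : sU Q = B ∪ sU Q' := sU_erase_eq hB
    have hsumQ : ∑ A ∈ Q', f A + f B = ∑ A ∈ Q, f A := Finset.sum_erase_add _ _ hB
    set T := P.filter (fun A => A ∩ B ≠ ∅) with hTdef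
    have hTsub : T ⊆ P := Finset.filter_subset _ _
    have hTmem : ∀ A, A ∈ T ↔ A ∈ P ∧ A ∩ B ≠ ∅ := by
      intro A; rw [hTdef, Finset.mem_filter]
    have hPTB : ∀ A ∈ P, A ∉ T → A ∩ B = ∅ := by
      intro A hA hAT
      by_contra h
      exact hAT ((hTmem A).mpr ⟨hA, h⟩)
    by_cases hT : T = ∅
    · -- B disjoint from all of P
      have hBP : ∀ A ∈ P, A ∩ B = ∅ := fun A hA => hPTB A hA (by rw [hT]; exact Finset.notMem_empty A)
      have hBnotP : B ∉ P := by
        intro h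
        exact hQne B hB (by have := hBP B h; rwa [Set.inter_self] at this)
      set P' := insert B P with hP'def
      have hP'ne : ∀ A ∈ P', A ≠ (∅ : Set E) := by
        intro A hA
        rcases Finset.mem_insert.mp hA with h | h
        · exact h ▸ hQne B hB
        · exact hPne A h
      have hP'd : ∀ A ∈ P', ∀ A' ∈ P', A ≠ A' → A ∩ A' = ∅ := by
        intro A hA A' hA' hne
        rcases Finset.mem_insert.mp hA with h | h <;> rcases Finset.mem_insert.mp hA' with h' | h'
        · exact absurd (h.trans h'.symm) hne
        · subst h; rw [Set.inter_comm]; exact hBP A' h'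
        · subst h'; exact hBP A h
        · exact hPd A h A' h' hne
      obtain ⟨R, S, hRne, hRd, hRU, hRsup, hSne, hSd, hSU, hSsub, hsum⟩ :=
        ih Q' P' hQ'card hP'ne hQ'ne hP'd hQ'd
      have hsUP' : sU P' = B ∪ sU P := by rw [hP'def, sU_insert]
      have hPB : sU P ∩ B = ∅ := by
        ext x
        simp only [Set.mem_inter_iff, mem_sU, Set.mem_empty_iff_false, iff_false, not_and]
        rintro ⟨A, hA, hx⟩ hxB
        exact absurd (Set.mem_inter hx hxB) (by rw [hBP A hA]; exact id)
      refine ⟨R, S, hRne, hRd, ?_, ?_, hSne, hSd, ?_, ?_, ?_⟩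
      · rw [hRU, hsUP', hsUQ]
        ext x; simp only [Set.mem_union]; tauto
      · intro W hW
        obtain ⟨D, hD, hDW⟩ := hRsup W hW
        rcases hD with hD | hD
        · rcases Finset.mem_insert.mp hD with h | h
          · exact ⟨D, Or.inr (h ▸ hB), hDW⟩
          · exact ⟨D, Or.inl h, hDW⟩
        · exact ⟨D, Or.inr (hQ'sub hD), hDW⟩
      · rw [hSU, hsUP', hsUQ]
        rw [Set.union_inter_distrib_right, hBQ']
        rw [Set.inter_union_distrib_left, hPB]
      · intro J hJ
        obtain ⟨B', hB', hJB⟩ := hSsub J hJ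
        exact ⟨B', hQ'sub hB', hJB⟩
      · have : ∑ A ∈ P', f A = f B + ∑ A ∈ P, f A := Finset.sum_insert hBnotP
        rw [this] at hsum
        linarith
    · -- merge B with the parts of P it meets
      have hTne : T.Nonempty := Finset.nonempty_of_ne_empty hT
      set M := B ∪ sU T with hMdef
      have hMne : M ≠ (∅ : Set E) := by
        intro h
        have hBne : B ≠ (∅ : Set E) := hQne B hB
        apply hBne
        rw [← Set.subset_empty_iff, ← h]; exact Set.subset_union_left
      have hMnotin : M ∉ P \ T := by
        intro h
        obtain ⟨A0, hA0⟩ := hTne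
        have hA0P := hTsub hA0
        have hMP : M ∈ P := (Finset.mem_sdiff.mp h).1
        have hMT : M ∉ T := (Finset.mem_sdiff.mp h).2
        have hne : M ≠ A0 := fun hh => hMT (hh ▸ hA0)
        have hdis := hPd M hMP A0 hA0P hne
        have hA0sub : A0 ⊆ M := (subset_sU hA0).trans Set.subset_union_right
        have hA0ne := hPne A0 hA0P
        apply hA0ne
        rw [← Set.subset_empty_iff, ← hdis]
        exact fun x hx => ⟨hA0sub hx, hx⟩
      set P' := insert M (P \ T) with hP'def
      have hP'ne : ∀ A ∈ P', A ≠ (∅ : Set E) := by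
        intro A hA
        rcases Finset.mem_insert.mp hA with h | h
        · exact h ▸ hMne
        · exact hPne A (Finset.mem_sdiff.mp h).1
      have hMdisj : ∀ A ∈ P \ T, M ∩ A = ∅ := by
        intro A hA
        have hAP := (Finset.mem_sdiff.mp hA).1
        have hAT := (Finset.mem_sdiff.mp hA).2
        have h1 : B ∩ A = ∅ := by rw [Set.inter_comm]; exact hPTB A hAP hAT
        have h2 : sU T ∩ A = ∅ := by
          ext x
          simp only [Set.mem_inter_iff, mem_sU, Set.mem_empty_iff_false, iff_false, not_and]
          rintro ⟨A', hA', hx⟩ hxA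
          have hA'P := hTsub hA'
          have hne : A' ≠ A := fun hh => hAT (hh ▸ hA')
          have := hPd A' hA'P A hAP hne
          exact absurd (Set.mem_inter hx hxA) (by rw [this]; exact id)
        rw [hMdef, Set.union_inter_distrib_right, h1, h2, Set.union_empty]
      have hP'd : ∀ A ∈ P', ∀ A' ∈ P', A ≠ A' → A ∩ A' = ∅ := by
        intro A hA A' hA' hne
        rcases Finset.mem_insert.mp hA with h | h <;> rcases Finset.mem_insert.mp hA' with h' | h'
        · exact absurd (h.trans h'.symm) hne
        · subst h; exact hMdisj A' h'
        · subst h'; rw [Set.inter_comm]; exact hMdisj A h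
        · exact hPd A (Finset.mem_sdiff.mp h).1 A' (Finset.mem_sdiff.mp h').1 hne
      obtain ⟨R, S, hRne, hRd, hRU, hRsup, hSne, hSd, hSU, hSsub, hsum⟩ :=
        ih Q' P' hQ'card hP'ne hQ'ne hP'd hQ'd
      have hsUP' : sU P' = B ∪ sU P := by
        rw [hP'def, sU_insert, hMdef, Set.union_assoc, sU_sdiff_union hTsub]
      -- pieces
      set Pieces := T.image (fun A => A ∩ B) with hPiecesdef
      have hpiece_inj : ∀ A ∈ T, ∀ A' ∈ T, A ∩ B = A' ∩ B → A = A' := by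
        intro A hA A' hA' heq
        by_contra hne
        have hdis := hPd A (hTsub hA) A' (hTsub hA') hne
        have hAB := (hTmem A).mp hA
        obtain ⟨x, hx⟩ := Set.nonempty_iff_ne_empty.mpr hAB.2
        have hx' : x ∈ A' ∩ B := heq ▸ hx
        exact absurd (Set.mem_inter hx.1 hx'.1) (by rw [hdis]; exact id)
      have hsum_pieces : ∑ J ∈ Pieces, f J = ∑ A ∈ T, f (A ∩ B) := by
        rw [hPiecesdef, Finset.sum_image hpiece_inj]
      have hpiece_ne : ∀ J ∈ Pieces, J ≠ (∅ : Set E) := by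
        intro J hJ
        obtain ⟨A, hA, rfl⟩ := Finset.mem_image.mp hJ
        exact ((hTmem A).mp hA).2
      have hpiece_subB : ∀ J ∈ Pieces, J ⊆ B := by
        intro J hJ
        obtain ⟨A, hA, rfl⟩ := Finset.mem_image.mp hJ
        exact Set.inter_subset_right
      have hSQ' : ∀ J ∈ S, J ⊆ sU Q' := by
        intro J hJ
        exact (subset_sU hJ).trans (by rw [hSU]; exact Set.inter_subset_right)
      have hSdisjPieces : ∀ J ∈ S, ∀ J' ∈ Pieces, J ∩ J' = ∅ := by
        intro J hJ J' hJ'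
        have h1 : J ⊆ sU Q' := hSQ' J hJ
        have h2 : J' ⊆ B := hpiece_subB J' hJ'
        rw [← Set.subset_empty_iff, ← hBQ']
        exact fun x hx => ⟨h2 hx.2, h1 hx.1⟩
      have hSPdisj : Disjoint S Pieces := by
        rw [Finset.disjoint_left]
        intro J hJ hJ'
        have := hSdisjPieces J hJ J hJ'
        rw [Set.inter_self] at this
        exact hSne J hJ this
      set S' := S ∪ Pieces with hS'def
      have hpieces_d : ∀ J ∈ Pieces, ∀ J' ∈ Pieces, J ≠ J' → J ∩ J' = ∅ := by
        intro J hJ J' hJ' hne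
        obtain ⟨A, hA, rfl⟩ := Finset.mem_image.mp hJ
        obtain ⟨A', hA', rfl⟩ := Finset.mem_image.mp hJ'
        have hAne : A ≠ A' := fun hh => hne (hh ▸ rfl)
        have := hPd A (hTsub hA) A' (hTsub hA') hAne
        rw [← Set.subset_empty_iff, ← this]
        exact fun x hx => ⟨hx.1.1, hx.2.1⟩
      refine ⟨R, S', ?_, ?_, ?_, ?_, ?_, ?_, ?_, ?_, ?_⟩
      · exact hRne
      · exact hRd
      · rw [hRU, hsUP', hsUQ]
        ext x; simp only [Set.mem_union]; tauto
      · intro W hW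
        obtain ⟨D, hD, hDW⟩ := hRsup W hW
        rcases hD with hD | hD
        · rcases Finset.mem_insert.mp hD with h | h
          · subst h
            exact ⟨B, Or.inr hB, Set.subset_union_left.trans hDW⟩
          · exact ⟨D, Or.inl (Finset.mem_sdiff.mp h).1, hDW⟩
        · exact ⟨D, Or.inr (hQ'sub hD), hDW⟩
      · intro J hJ
        rcases Finset.mem_union.mp hJ with h | h
        · exact hSne J h
        · exact hpiece_ne J h
      · intro J hJ J' hJ' hne
        rcases Finset.mem_union.mp hJ with h | h <;> rcases Finset.mem_union.mp hJ' with h' | h'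
        · exact hSd J h J' h' hne
        · exact hSdisjPieces J h J' h'
        · rw [Set.inter_comm]; exact hSdisjPieces J' h' J h
        · exact hpieces_d J h J' h' hne
      · -- sU S' = sU P ∩ sU Q
        have hsUPieces : sU Pieces = sU T ∩ B := by
          ext x
          simp only [mem_sU, Set.mem_inter_iff]
          constructor
          · rintro ⟨J, hJ, hx⟩
            obtain ⟨A, hA, rfl⟩ := Finset.mem_image.mp hJ
            exact ⟨⟨A, hA, hx.1⟩, hx.2⟩
          · rintro ⟨⟨A, hA, hx⟩, hxB⟩
            exact ⟨A ∩ B, Finset.mem_image.mpr ⟨A, hA, rfl⟩, hx, hxB⟩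
        have hPB : sU P ∩ B = sU T ∩ B := by
          ext x
          simp only [Set.mem_inter_iff, mem_sU]
          constructor
          · rintro ⟨⟨A, hA, hx⟩, hxB⟩
            have hAT : A ∈ T := (hTmem A).mpr
              ⟨hA, fun hh => Set.eq_empty_iff_forall_notMem.mp hh x ⟨hx, hxB⟩⟩
            exact ⟨⟨A, hAT, hx⟩, hxB⟩
          · rintro ⟨⟨A, hA, hx⟩, hxB⟩
            exact ⟨⟨A, hTsub hA, hx⟩, hxB⟩
        rw [hS'def, sU_union, hSU, hsUP', hsUQ, hsUPieces]
        rw [Set.union_inter_distrib_right, hBQ']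
        rw [Set.inter_union_distrib_left, hPB]
        ext x; simp only [Set.mem_union, Set.mem_inter_iff, Set.mem_empty_iff_false]; tauto
      · intro J hJ
        rcases Finset.mem_union.mp hJ with h | h
        · obtain ⟨B', hB', hJB⟩ := hSsub J h
          exact ⟨B', hQ'sub hB', hJB⟩
        · exact ⟨B, hB, hpiece_subB J h⟩
      · -- the sum inequality
        have hsumP' : ∑ A ∈ P', f A = f M + ∑ A ∈ P \ T, f A := Finset.sum_insert hMnotin
        have hsumPT : ∑ A ∈ P \ T, f A + ∑ A ∈ T, f A = ∑ A ∈ P, f A := Finset.sum_sdiff hTsub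
        have hsumS' : ∑ A ∈ S', f A = ∑ A ∈ S, f A + ∑ A ∈ T, f (A ∩ B) := by
          rw [hS'def, Finset.sum_union hSPdisj, hsum_pieces]
        have htele := tele f hsub T (fun A hA A' hA' hne => hPd A (hTsub hA) A' (hTsub hA') hne) B
        rw [← hMdef] at htele
        rw [hsumS']
        rw [hsumP'] at hsum
        linarith

end Stmt8Aux

open Stmt8Aux in
theorem stmt_8 {E : Type*} [Fintype E] (f : Set E → ℝ)
    (hmono : ∀ X Y : Set E, X ⊆ Y → f X ≤ f Y)
    (hsub : ∀ X Y : Set E, f (X ∪ Y) + f (X ∩ Y) ≤ f X + f Y)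
    (hneg : f ∅ < 0)
    (fc : Set E → ℝ) (hfc0 : fc ∅ = 0)
    (hfc : ∀ U : Set E, U ≠ ∅ →
      IsLeast {r | ∃ P : Finset (Set E), (∀ A ∈ P, A ≠ ∅) ∧
        (↑P : Set (Set E)).PairwiseDisjoint id ∧ (⋃ A ∈ P, A) = U ∧
        r = ∑ A ∈ P, max (f A) 0} (fc U)) :
    ∀ X Y : Set E, fc (X ∪ Y) + fc (X ∩ Y) ≤ fc X + fc Y := by
  classical
  intro X Y
  by_cases hX : X = ∅
  · subst hX
    rw [Set.empty_union, Set.empty_inter, hfc0]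
    linarith
  by_cases hY : Y = ∅
  · subst hY
    rw [Set.union_empty, Set.inter_empty, hfc0]
  -- basic helpers
  have gpos_of : ∀ W : Set E, 0 < max (f W) 0 → 0 < f W := by
    intro W h
    rcases lt_max_iff.mp h with h | h
    · exact h
    · exact absurd h (lt_irrefl 0)
  have hmonog : ∀ A B : Set E, A ⊆ B → max (f A) 0 ≤ max (f B) 0 :=
    fun A B h => max_le_max (hmono A B h) le_rfl
  have hsU_mono : ∀ (s t : Finset (Set E)), s ⊆ t → sU s ⊆ sU t := by
    intro s t hst x hx
    obtain ⟨A, hA, hxA⟩ := mem_sU.mp hx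
    exact mem_sU.mpr ⟨A, hst hA, hxA⟩
  have hdisj_sU : ∀ (A : Set E) (s : Finset (Set E)), (∀ A' ∈ s, A ∩ A' = ∅) →
      A ∩ sU s = ∅ := by
    intro A s h
    ext x
    simp only [Set.mem_inter_iff, mem_sU, Set.mem_empty_iff_false, iff_false, not_and]
    rintro hxA ⟨A', hA', hx⟩
    exact Set.eq_empty_iff_forall_notMem.mp (h A' hA') x ⟨hxA, hx⟩
  have unpwd : ∀ (P : Finset (Set E)), (↑P : Set (Set E)).PairwiseDisjoint id →
      ∀ A ∈ P, ∀ A' ∈ P, A ≠ A' → A ∩ A' = ∅ := by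
    intro P h A hA A' hA' hne
    exact Set.disjoint_iff_inter_eq_empty.mp (h (Finset.mem_coe.mpr hA) (Finset.mem_coe.mpr hA') hne)
  have pwd : ∀ (P : Finset (Set E)), (∀ A ∈ P, ∀ A' ∈ P, A ≠ A' → A ∩ A' = ∅) →
      (↑P : Set (Set E)).PairwiseDisjoint id := by
    intro P h A hA A' hA' hne
    exact Set.disjoint_iff_inter_eq_empty.mpr (h A (Finset.mem_coe.mp hA) A' (Finset.mem_coe.mp hA') hne)
  have hfinset_disj : ∀ (𝒜 ℬ : Finset (Set E)), (∀ A ∈ 𝒜, A ≠ (∅ : Set E)) →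
      (∀ A ∈ 𝒜, ∀ B ∈ ℬ, A ∩ B = ∅) → Disjoint 𝒜 ℬ := by
    intro 𝒜 ℬ hne hcross
    rw [Finset.disjoint_left]
    intro C hC hC'
    have := hcross C hC C hC'
    rw [Set.inter_self] at this
    exact hne C hC this
  have hcomb : ∀ (𝒜 ℬ : Finset (Set E)),
      (∀ A ∈ 𝒜, ∀ A' ∈ 𝒜, A ≠ A' → A ∩ A' = ∅) →
      (∀ B ∈ ℬ, ∀ B' ∈ ℬ, B ≠ B' → B ∩ B' = ∅) →
      (∀ A ∈ 𝒜, ∀ B ∈ ℬ, A ∩ B = ∅) →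
      ∀ C ∈ 𝒜 ∪ ℬ, ∀ C' ∈ 𝒜 ∪ ℬ, C ≠ C' → C ∩ C' = ∅ := by
    intro 𝒜 ℬ h1 h2 h3 C hC C' hC' hne
    rcases Finset.mem_union.mp hC with h | h <;> rcases Finset.mem_union.mp hC' with h' | h'
    · exact h1 C h C' h' hne
    · exact h3 C h C' h'
    · rw [Set.inter_comm]; exact h3 C' h' C h
    · exact h2 C h C' h' hne
  -- fc is below the value of any partition
  have fc_le : ∀ (U : Set E) (P : Finset (Set E)), (∀ A ∈ P, A ≠ (∅ : Set E)) →
      (∀ A ∈ P, ∀ A' ∈ P, A ≠ A' → A ∩ A' = ∅) → sU P = U →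
      fc U ≤ ∑ A ∈ P, max (f A) 0 := by
    intro U P hPne hPd hsU
    by_cases hU : U = ∅
    · have hP : P = ∅ := by
        by_contra h
        obtain ⟨A, hA⟩ := Finset.nonempty_of_ne_empty h
        apply hPne A hA
        rw [← Set.subset_empty_iff]
        rw [hU] at hsU
        exact hsU ▸ subset_sU hA
      rw [hU, hfc0, hP]
      simp
    · exact (hfc U hU).2 ⟨P, hPne, pwd P hPd, hsU, rfl⟩
  -- existence of an optimal partition with maximal number of parts
  have exmax : ∀ U : Set E, U ≠ ∅ → ∃ P : Finset (Set E),
      ((∀ A ∈ P, A ≠ (∅ : Set E)) ∧ (∀ A ∈ P, ∀ A' ∈ P, A ≠ A' → A ∩ A' = ∅) ∧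
        sU P = U ∧ ∑ A ∈ P, max (f A) 0 = fc U) ∧
      (∀ P' : Finset (Set E), (∀ A ∈ P', A ≠ (∅ : Set E)) →
        (∀ A ∈ P', ∀ A' ∈ P', A ≠ A' → A ∩ A' = ∅) → sU P' = U →
        ∑ A ∈ P', max (f A) 0 = fc U → P'.card ≤ P.card) := by
    intro U hU
    obtain ⟨P₀, h1, h2, h3, h4⟩ := (hfc U hU).1
    set 𝒮 : Finset (Finset (Set E)) := Finset.univ.filter (fun P =>
      (∀ A ∈ P, A ≠ (∅ : Set E)) ∧ (∀ A ∈ P, ∀ A' ∈ P, A ≠ A' → A ∩ A' = ∅) ∧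
      sU P = U ∧ ∑ A ∈ P, max (f A) 0 = fc U) with h𝒮
    have h₀ : P₀ ∈ 𝒮 := by
      rw [h𝒮, Finset.mem_filter]
      exact ⟨Finset.mem_univ _, h1, unpwd P₀ h2, h3, h4.symm⟩
    obtain ⟨P, hP, hmax⟩ := Finset.exists_max_image 𝒮 (fun P => P.card) ⟨P₀, h₀⟩
    rw [h𝒮, Finset.mem_filter] at hP
    refine ⟨P, ⟨hP.2.1, hP.2.2.1, hP.2.2.2.1, hP.2.2.2.2⟩, ?_⟩
    intro P' c1 c2 c3 c4
    exact hmax P' (by rw [h𝒮, Finset.mem_filter]; exact ⟨Finset.mem_univ _, c1, c2, c3, c4⟩)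
  -- the strict splitting property of maximal optimal partitions
  have strictOf : ∀ (U : Set E) (P : Finset (Set E)),
      (∀ A ∈ P, A ≠ (∅ : Set E)) → (∀ A ∈ P, ∀ A' ∈ P, A ≠ A' → A ∩ A' = ∅) →
      sU P = U → ∑ A ∈ P, max (f A) 0 = fc U →
      (∀ P' : Finset (Set E), (∀ A ∈ P', A ≠ (∅ : Set E)) →
        (∀ A ∈ P', ∀ A' ∈ P', A ≠ A' → A ∩ A' = ∅) → sU P' = U →
        ∑ A ∈ P', max (f A) 0 = fc U → P'.card ≤ P.card) →
      ∀ B ∈ P, ∀ J : Set E, J ⊆ B → J ≠ ∅ → B \ J ≠ ∅ →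
        max (f B) 0 < max (f J) 0 + max (f (B \ J)) 0 := by
    intro U P hPne hPd hsU hval hmax B hB J hJB hJne hBJne
    have hJBdisj : J ∩ (B \ J) = ∅ := Set.inter_diff_self J B
    have hJneBJ : J ≠ B \ J := by
      intro h
      apply hJne
      have := hJBdisj
      rw [← h, Set.inter_self] at this
      exact this
    have herased : ∀ A ∈ P.erase B, A ∩ B = ∅ := by
      intro A hA
      exact hPd A (Finset.erase_subset _ _ hA) B hB (Finset.mem_erase.mp hA).1
    have hB_er : ∀ A' ∈ P.erase B, ∀ C : Set E, C ⊆ B → C ∩ A' = ∅ := by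
      intro A' h C hCB
      have h1 : C ∩ A' ⊆ A' ∩ B := fun x hx => ⟨hx.2, hCB hx.1⟩
      rw [herased A' h] at h1
      exact Set.subset_empty_iff.mp h1
    have hBJnotin : B \ J ∉ P.erase B := by
      intro h
      have := hB_er _ h (B \ J) Set.diff_subset
      rw [Set.inter_self] at this
      exact hBJne this
    have hJnotin : J ∉ insert (B \ J) (P.erase B) := by
      intro h
      rcases Finset.mem_insert.mp h with h | h
      · exact hJneBJ h
      · have := hB_er _ h J hJB
        rw [Set.inter_self] at this
        exact hJne this
    set P' := insert J (insert (B \ J) (P.erase B)) with hP'def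
    have hP'ne : ∀ A ∈ P', A ≠ (∅ : Set E) := by
      intro A hA
      rcases Finset.mem_insert.mp hA with h | h
      · exact h ▸ hJne
      · rcases Finset.mem_insert.mp h with h' | h'
        · exact h' ▸ hBJne
        · exact hPne A (Finset.erase_subset _ _ h')
    have hP'd : ∀ A ∈ P', ∀ A' ∈ P', A ≠ A' → A ∩ A' = ∅ := by
      intro A hA A' hA' hne
      have memcase : ∀ C, C ∈ P' → C = J ∨ C = B \ J ∨ C ∈ P.erase B := by
        intro C hC
        rcases Finset.mem_insert.mp hC with h | h
        · exact Or.inl h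
        · rcases Finset.mem_insert.mp h with h' | h'
          · exact Or.inr (Or.inl h')
          · exact Or.inr (Or.inr h')
      rcases memcase A hA with h | h | h <;> rcases memcase A' hA' with h' | h' | h'
      · exact absurd (h.trans h'.symm) hne
      · exact h ▸ h' ▸ hJBdisj
      · exact h ▸ hB_er A' h' J hJB
      · rw [h, h', Set.inter_comm]; exact hJBdisj
      · exact absurd (h.trans h'.symm) hne
      · exact h ▸ hB_er A' h' (B \ J) Set.diff_subset
      · rw [h', Set.inter_comm]; exact hB_er A h J hJB
      · rw [h', Set.inter_comm]; exact hB_er A h (B \ J) Set.diff_subset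
      · exact hPd A (Finset.erase_subset _ _ h) A' (Finset.erase_subset _ _ h') hne
    have hsU' : sU P' = U := by
      rw [hP'def, sU_insert, sU_insert, ← Set.union_assoc, Set.union_diff_cancel hJB,
        ← sU_erase_eq hB, hsU]
    have hsum' : ∑ A ∈ P', max (f A) 0 =
        max (f J) 0 + (max (f (B \ J)) 0 + ∑ A ∈ P.erase B, max (f A) 0) := by
      rw [hP'def, Finset.sum_insert hJnotin, Finset.sum_insert hBJnotin]
    have hsum_er : ∑ A ∈ P.erase B, max (f A) 0 + max (f B) 0 = ∑ A ∈ P, max (f A) 0 :=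
      Finset.sum_erase_add _ _ hB
    have hle : fc U ≤ ∑ A ∈ P', max (f A) 0 := fc_le U P' hP'ne hP'd hsU'
    by_contra hcon
    push_neg at hcon
    have heq : ∑ A ∈ P', max (f A) 0 = fc U := by
      have h1 : ∑ A ∈ P', max (f A) 0 ≤ fc U := by
        rw [hsum']
        linarith
      linarith
    have hcard := hmax P' hP'ne hP'd hsU' heq
    have hcard' : P'.card = P.card + 1 := by
      rw [hP'def, Finset.card_insert_of_notMem hJnotin, Finset.card_insert_of_notMem hBJnotin,
        Finset.card_erase_of_mem hB]
      have : 1 ≤ P.card := Finset.card_pos.mpr ⟨B, hB⟩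
      omega
    omega
  -- the key positivity property
  have key : ∀ (P' Q' : Finset (Set E)) (Y' : Set E),
      (∀ B ∈ P', ∀ J : Set E, J ⊆ B → J ≠ ∅ → B \ J ≠ ∅ →
        max (f B) 0 < max (f J) 0 + max (f (B \ J)) 0) →
      (∀ B ∈ Q', ∀ J : Set E, J ⊆ B → J ≠ ∅ → B \ J ≠ ∅ →
        max (f B) 0 < max (f J) 0 + max (f (B \ J)) 0) →
      sU Q' = Y' →
      ∀ A ∈ P', A ∩ Y' ≠ ∅ → A ∉ Q' → ∀ J : Set E, J ⊆ A → J ≠ ∅ → 0 < f J := by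
    intro P' Q' Y' hsP hsQ hQU A hA hAY hAQ J hJA hJne
    have hdiff_ne : ∀ (C D : Set E), D ⊆ C → D ≠ C → C \ D ≠ ∅ := by
      intro C D h1 h2 h
      apply h2
      apply Set.Subset.antisymm h1
      intro z hz
      by_contra hzD
      exact Set.eq_empty_iff_forall_notMem.mp h z ⟨hz, hzD⟩
    by_cases hJA' : J = A
    · have hgoal : 0 < f A := by
        by_cases hsing : ∃ x z : E, x ∈ A ∧ z ∈ A ∧ x ≠ z
        · obtain ⟨x, z, hx, hz, hxz⟩ := hsing
          have h1 : ({x} : Set E) ⊆ A := Set.singleton_subset_iff.mpr hx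
          have h2 : ({x} : Set E) ≠ ∅ := Set.singleton_ne_empty x
          have h3 : A \ {x} ≠ ∅ := by
            intro h
            exact Set.eq_empty_iff_forall_notMem.mp h z
              ⟨hz, by simp only [Set.mem_singleton_iff]; exact fun hh => hxz hh.symm⟩
          have hstr := hsP A hA {x} h1 h2 h3
          have hle1 : max (f (A \ {x})) 0 ≤ max (f A) 0 := hmonog _ _ Set.diff_subset
          have hgx : 0 < max (f ({x} : Set E)) 0 := by linarith
          have hfx := gpos_of _ hgx
          have := hmono {x} A h1
          linarith
        · obtain ⟨y, hy⟩ := Set.nonempty_iff_ne_empty.mpr hAY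
          have hyA : y ∈ A := hy.1
          have hAx : A = {y} := by
            ext z
            simp only [Set.mem_singleton_iff]
            constructor
            · intro hz
              by_contra hzy
              exact hsing ⟨y, z, hyA, hz, fun h => hzy h.symm⟩
            · intro h
              exact h ▸ hyA
          have hyY : y ∈ Y' := hy.2
          rw [← hQU] at hyY
          obtain ⟨B, hBQ, hyB⟩ := mem_sU.mp hyY
          have hAB : A ⊆ B := by
            rw [hAx]
            exact Set.singleton_subset_iff.mpr hyB
          have hAneB : A ≠ B := fun h => hAQ (h ▸ hBQ)
          have hBA : B \ A ≠ ∅ := hdiff_ne B A hAB hAneB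
          have hAne : A ≠ (∅ : Set E) := by
            rw [hAx]; exact Set.singleton_ne_empty y
          have hstr := hsQ B hBQ A hAB hAne hBA
          have hle1 : max (f (B \ A)) 0 ≤ max (f B) 0 := hmonog _ _ Set.diff_subset
          have : 0 < max (f A) 0 := by linarith
          exact gpos_of _ this
      exact hJA' ▸ hgoal
    · have hAJ : A \ J ≠ ∅ := hdiff_ne A J hJA hJA'
      have hstr := hsP A hA J hJA hJne hAJ
      have hle1 : max (f (A \ J)) 0 ≤ max (f A) 0 := hmonog _ _ Set.diff_subset
      have : 0 < max (f J) 0 := by linarith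
      exact gpos_of _ this
  -- get the two maximal optimal partitions
  obtain ⟨P, ⟨hPne, hPd, hPU, hPval⟩, hPmax⟩ := exmax X hX
  obtain ⟨Q, ⟨hQne, hQd, hQU, hQval⟩, hQmax⟩ := exmax Y hY
  have hstrictP := strictOf X P hPne hPd hPU hPval hPmax
  have hstrictQ := strictOf Y Q hQne hQd hQU hQval hQmax
  have hPsubX : ∀ A ∈ P, A ⊆ X := fun A hA => hPU ▸ subset_sU hA
  have hQsubY : ∀ B ∈ Q, B ⊆ Y := fun B hB => hQU ▸ subset_sU hB
  -- split the partitions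
  set P0 := P.filter (fun A => A ∩ Y = ∅) with hP0def
  set P1 := P.filter (fun A => A ∩ Y ≠ ∅ ∧ A ∉ Q) with hP1def
  set Q0 := Q.filter (fun B => B ∩ X = ∅) with hQ0def
  set Q1 := Q.filter (fun B => B ∩ X ≠ ∅ ∧ B ∉ P) with hQ1def
  set PQ := P ∩ Q with hPQdef
  have hP0mem : ∀ A, A ∈ P0 ↔ A ∈ P ∧ A ∩ Y = ∅ := fun A => by
    rw [hP0def, Finset.mem_filter]
  have hP1mem : ∀ A, A ∈ P1 ↔ A ∈ P ∧ A ∩ Y ≠ ∅ ∧ A ∉ Q := fun A => by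
    rw [hP1def, Finset.mem_filter]
  have hQ0mem : ∀ B, B ∈ Q0 ↔ B ∈ Q ∧ B ∩ X = ∅ := fun B => by
    rw [hQ0def, Finset.mem_filter]
  have hQ1mem : ∀ B, B ∈ Q1 ↔ B ∈ Q ∧ B ∩ X ≠ ∅ ∧ B ∉ P := fun B => by
    rw [hQ1def, Finset.mem_filter]
  have hPQmem : ∀ A, A ∈ PQ ↔ A ∈ P ∧ A ∈ Q := fun A => by
    rw [hPQdef, Finset.mem_inter]
  have hPQY : ∀ A ∈ PQ, A ∩ Y ≠ ∅ := by
    intro A hA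
    have h1 := (hPQmem A).mp hA
    have h2 : A ⊆ Y := hQsubY A h1.2
    have h3 : A ≠ ∅ := hPne A h1.1
    intro h
    apply h3
    rw [← Set.subset_empty_iff, ← h]
    exact fun x hx => ⟨hx, h2 hx⟩
  have hPQX : ∀ A ∈ PQ, A ∩ X ≠ ∅ := by
    intro A hA
    have h1 := (hPQmem A).mp hA
    have h2 : A ⊆ X := hPsubX A h1.1
    have h3 : A ≠ ∅ := hPne A h1.1
    intro h
    apply h3
    rw [← Set.subset_empty_iff, ← h]
    exact fun x hx => ⟨hx, h2 hx⟩
  have hPsplit : (P0 ∪ P1) ∪ PQ = P := by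
    ext A
    simp only [Finset.mem_union]
    constructor
    · rintro ((h | h) | h)
      · exact ((hP0mem A).mp h).1
      · exact ((hP1mem A).mp h).1
      · exact ((hPQmem A).mp h).1
    · intro hA
      by_cases h1 : A ∩ Y = ∅
      · exact Or.inl (Or.inl ((hP0mem A).mpr ⟨hA, h1⟩))
      · by_cases h2 : A ∈ Q
        · exact Or.inr ((hPQmem A).mpr ⟨hA, h2⟩)
        · exact Or.inl (Or.inr ((hP1mem A).mpr ⟨hA, h1, h2⟩))
  have hQsplit : (Q0 ∪ Q1) ∪ PQ = Q := by
    ext B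
    simp only [Finset.mem_union]
    constructor
    · rintro ((h | h) | h)
      · exact ((hQ0mem B).mp h).1
      · exact ((hQ1mem B).mp h).1
      · exact ((hPQmem B).mp h).2
    · intro hB
      by_cases h1 : B ∩ X = ∅
      · exact Or.inl (Or.inl ((hQ0mem B).mpr ⟨hB, h1⟩))
      · by_cases h2 : B ∈ P
        · exact Or.inr ((hPQmem B).mpr ⟨h2, hB⟩)
        · exact Or.inl (Or.inr ((hQ1mem B).mpr ⟨hB, h1, h2⟩))
  -- finset disjointness of the pieces for sums
  have hd_P0P1 : Disjoint P0 P1 := by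
    rw [Finset.disjoint_left]
    intro A h0 h1
    exact ((hP1mem A).mp h1).2.1 ((hP0mem A).mp h0).2
  have hd_P01PQ : Disjoint (P0 ∪ P1) PQ := by
    rw [Finset.disjoint_left]
    intro A h0 h1
    rcases Finset.mem_union.mp h0 with h | h
    · exact hPQY A h1 ((hP0mem A).mp h).2
    · exact ((hP1mem A).mp h).2.2 ((hPQmem A).mp h1).2
  have hd_Q0Q1 : Disjoint Q0 Q1 := by
    rw [Finset.disjoint_left]
    intro B h0 h1
    exact ((hQ1mem B).mp h1).2.1 ((hQ0mem B).mp h0).2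
  have hd_Q01PQ : Disjoint (Q0 ∪ Q1) PQ := by
    rw [Finset.disjoint_left]
    intro B h0 h1
    rcases Finset.mem_union.mp h0 with h | h
    · exact hPQX B h1 ((hQ0mem B).mp h).2
    · exact ((hQ1mem B).mp h).2.2 ((hPQmem B).mp h1).1
  have hsumPsplit : ∑ A ∈ P, max (f A) 0 =
      ∑ A ∈ P0, max (f A) 0 + ∑ A ∈ P1, max (f A) 0 + ∑ A ∈ PQ, max (f A) 0 := by
    rw [← hPsplit, Finset.sum_union hd_P01PQ, Finset.sum_union hd_P0P1]
  have hsumQsplit : ∑ B ∈ Q, max (f B) 0 =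
      ∑ B ∈ Q0, max (f B) 0 + ∑ B ∈ Q1, max (f B) 0 + ∑ B ∈ PQ, max (f B) 0 := by
    rw [← hQsplit, Finset.sum_union hd_Q01PQ, Finset.sum_union hd_Q0Q1]
  -- positivity on P1 and Q1
  have hPosP1 : ∀ A ∈ P1, ∀ J : Set E, J ⊆ A → J ≠ ∅ → 0 < f J := by
    intro A hA
    obtain ⟨h1, h2, h3⟩ := (hP1mem A).mp hA
    exact key P Q Y hstrictP hstrictQ hQU A h1 h2 h3
  have hPosQ1 : ∀ B ∈ Q1, ∀ J : Set E, J ⊆ B → J ≠ ∅ → 0 < f J := by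
    intro B hB
    obtain ⟨h1, h2, h3⟩ := (hQ1mem B).mp hB
    exact key Q P X hstrictQ hstrictP hPU B h1 h2 h3
  -- apply the core lemma to P1, Q1
  have hP1sub : P1 ⊆ P := Finset.filter_subset _ _
  have hQ1sub : Q1 ⊆ Q := Finset.filter_subset _ _
  obtain ⟨R1, S1, hR1ne, hR1d, hR1U, hR1sup, hS1ne, hS1d, hS1U, hS1sub, hCLsum⟩ :=
    CL f hsub Q1.card Q1 P1 rfl
      (fun A hA => hPne A (hP1sub hA))
      (fun B hB => hQne B (hQ1sub hB))
      (fun A hA A' hA' hne => hPd A (hP1sub hA) A' (hP1sub hA') hne)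
      (fun B hB B' hB' hne => hQd B (hQ1sub hB) B' (hQ1sub hB') hne)
  -- transfer between f and max f 0 on the relevant families
  have hposR1 : ∀ W ∈ R1, 0 < f W := by
    intro W hW
    obtain ⟨D, hD, hDW⟩ := hR1sup W hW
    have hDpos : 0 < f D := by
      rcases hD with hD | hD
      · exact hPosP1 D hD D subset_rfl (hPne D (hP1sub hD))
      · exact hPosQ1 D hD D subset_rfl (hQne D (hQ1sub hD))
    linarith [hmono D W hDW]
  have hposS1 : ∀ J ∈ S1, 0 < f J := by
    intro J hJ
    obtain ⟨B, hB, hJB⟩ := hS1sub J hJ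
    exact hPosQ1 B hB J hJB (hS1ne J hJ)
  have hgf : ∀ (s : Finset (Set E)), (∀ A ∈ s, 0 < f A) →
      ∑ A ∈ s, max (f A) 0 = ∑ A ∈ s, f A := by
    intro s h
    exact Finset.sum_congr rfl (fun A hA => max_eq_left (h A hA).le)
  have hposP1' : ∀ A ∈ P1, 0 < f A := fun A hA => hPosP1 A hA A subset_rfl (hPne A (hP1sub hA))
  have hposQ1' : ∀ B ∈ Q1, 0 < f B := fun B hB => hPosQ1 B hB B subset_rfl (hQne B (hQ1sub hB))
  have htrans : ∑ A ∈ R1, max (f A) 0 + ∑ A ∈ S1, max (f A) 0 ≤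
      ∑ A ∈ P1, max (f A) 0 + ∑ A ∈ Q1, max (f A) 0 := by
    rw [hgf R1 hposR1, hgf S1 hposS1, hgf P1 hposP1', hgf Q1 hposQ1']
    exact hCLsum
  -- territory facts
  have hsUP1X : sU P1 ⊆ X := hPU ▸ hsU_mono P1 P hP1sub
  have hsUQ1Y : sU Q1 ⊆ Y := hQU ▸ hsU_mono Q1 Q hQ1sub
  have hR1reg : ∀ W ∈ R1, W ⊆ sU P1 ∪ sU Q1 := fun W hW => hR1U ▸ subset_sU hW
  -- cross disjointness facts
  have hP0_P1 : ∀ A ∈ P0, A ∩ sU P1 = ∅ := by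
    intro A hA
    apply hdisj_sU
    intro A' hA'
    have h1 := (hP0mem A).mp hA
    have h2 := (hP1mem A').mp hA'
    have hne : A ≠ A' := by
      intro h
      exact h2.2.1 (h ▸ h1.2)
    exact hPd A h1.1 A' h2.1 hne
  have hQ0_Q1 : ∀ B ∈ Q0, B ∩ sU Q1 = ∅ := by
    intro B hB
    apply hdisj_sU
    intro B' hB'
    have h1 := (hQ0mem B).mp hB
    have h2 := (hQ1mem B').mp hB'
    have hne : B ≠ B' := by
      intro h
      exact h2.2.1 (h ▸ h1.2)
    exact hQd B h1.1 B' h2.1 hne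
  have hPQ_P1 : ∀ C ∈ PQ, C ∩ sU P1 = ∅ := by
    intro C hC
    apply hdisj_sU
    intro A' hA'
    have h1 := (hPQmem C).mp hC
    have h2 := (hP1mem A').mp hA'
    have hne : C ≠ A' := by
      intro h
      exact h2.2.2 (h ▸ h1.2)
    exact hPd C h1.1 A' h2.1 hne
  have hPQ_Q1 : ∀ C ∈ PQ, C ∩ sU Q1 = ∅ := by
    intro C hC
    apply hdisj_sU
    intro B' hB'
    have h1 := (hPQmem C).mp hC
    have h2 := (hQ1mem B').mp hB'
    have hne : C ≠ B' := by
      intro h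
      exact h2.2.2 (h ▸ h1.1)
    exact hQd C h1.2 B' h2.1 hne
  have empty_of_subset : ∀ (s t : Set E), s ⊆ t → t = ∅ → s = ∅ := by
    intro s t h1 h2
    rw [← Set.subset_empty_iff, ← h2]
    exact h1
  -- cross disjointness between groups
  have cross_R1_P0 : ∀ W ∈ R1, ∀ A ∈ P0, W ∩ A = ∅ := by
    intro W hW A hA
    have h0 := (hP0mem A).mp hA
    ext x
    simp only [Set.mem_inter_iff, Set.mem_empty_iff_false, iff_false, not_and]
    intro hxW hxA
    rcases (Set.mem_union _ _ _).mp (hR1reg W hW hxW) with h | h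
    · exact Set.eq_empty_iff_forall_notMem.mp (hP0_P1 A hA) x ⟨hxA, h⟩
    · exact Set.eq_empty_iff_forall_notMem.mp h0.2 x ⟨hxA, hsUQ1Y h⟩
  have cross_R1_Q0 : ∀ W ∈ R1, ∀ B ∈ Q0, W ∩ B = ∅ := by
    intro W hW B hB
    have h0 := (hQ0mem B).mp hB
    ext x
    simp only [Set.mem_inter_iff, Set.mem_empty_iff_false, iff_false, not_and]
    intro hxW hxB
    rcases (Set.mem_union _ _ _).mp (hR1reg W hW hxW) with h | h
    · exact Set.eq_empty_iff_forall_notMem.mp h0.2 x ⟨hxB, hsUP1X h⟩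
    · exact Set.eq_empty_iff_forall_notMem.mp (hQ0_Q1 B hB) x ⟨hxB, h⟩
  have cross_R1_PQ : ∀ W ∈ R1, ∀ C ∈ PQ, W ∩ C = ∅ := by
    intro W hW C hC
    ext x
    simp only [Set.mem_inter_iff, Set.mem_empty_iff_false, iff_false, not_and]
    intro hxW hxC
    rcases (Set.mem_union _ _ _).mp (hR1reg W hW hxW) with h | h
    · exact Set.eq_empty_iff_forall_notMem.mp (hPQ_P1 C hC) x ⟨hxC, h⟩
    · exact Set.eq_empty_iff_forall_notMem.mp (hPQ_Q1 C hC) x ⟨hxC, h⟩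
  have cross_P0_Q0 : ∀ A ∈ P0, ∀ B ∈ Q0, A ∩ B = ∅ := by
    intro A hA B hB
    have h1 := (hP0mem A).mp hA
    have h2 := (hQ0mem B).mp hB
    ext x
    simp only [Set.mem_inter_iff, Set.mem_empty_iff_false, iff_false, not_and]
    intro hxA hxB
    exact Set.eq_empty_iff_forall_notMem.mp h2.2 x ⟨hxB, hPsubX A h1.1 hxA⟩
  have cross_P0_PQ : ∀ A ∈ P0, ∀ C ∈ PQ, A ∩ C = ∅ := by
    intro A hA C hC
    have h1 := (hP0mem A).mp hA
    have h2 := (hPQmem C).mp hC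
    have hne : A ≠ C := by
      intro h
      exact hPQY C hC (h ▸ h1.2)
    exact hPd A h1.1 C h2.1 hne
  have cross_Q0_PQ : ∀ B ∈ Q0, ∀ C ∈ PQ, B ∩ C = ∅ := by
    intro B hB C hC
    have h1 := (hQ0mem B).mp hB
    have h2 := (hPQmem C).mp hC
    have hne : B ≠ C := by
      intro h
      exact hPQX C hC (h ▸ h1.2)
    exact hQd B h1.1 C h2.2 hne
  have cross_S1_PQ : ∀ J ∈ S1, ∀ C ∈ PQ, J ∩ C = ∅ := by
    intro J hJ C hC
    have h1 : J ⊆ sU Q1 := by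
      have := subset_sU hJ
      rw [hS1U] at this
      exact this.trans Set.inter_subset_right
    ext x
    simp only [Set.mem_inter_iff, Set.mem_empty_iff_false, iff_false, not_and]
    intro hxJ hxC
    exact Set.eq_empty_iff_forall_notMem.mp (hPQ_Q1 C hC) x ⟨hxC, h1 hxJ⟩
  -- internal disjointness of the subfamilies
  have hP0d : ∀ A ∈ P0, ∀ A' ∈ P0, A ≠ A' → A ∩ A' = ∅ := by
    intro A hA A' hA' hne
    exact hPd A ((hP0mem A).mp hA).1 A' ((hP0mem A').mp hA').1 hne
  have hQ0d : ∀ B ∈ Q0, ∀ B' ∈ Q0, B ≠ B' → B ∩ B' = ∅ := by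
    intro B hB B' hB' hne
    exact hQd B ((hQ0mem B).mp hB).1 B' ((hQ0mem B').mp hB').1 hne
  have hPQd : ∀ C ∈ PQ, ∀ C' ∈ PQ, C ≠ C' → C ∩ C' = ∅ := by
    intro C hC C' hC' hne
    exact hPd C ((hPQmem C).mp hC).1 C' ((hPQmem C').mp hC').1 hne
  have hP0ne' : ∀ A ∈ P0, A ≠ (∅ : Set E) := fun A hA => hPne A ((hP0mem A).mp hA).1
  have hQ0ne' : ∀ B ∈ Q0, B ≠ (∅ : Set E) := fun B hB => hQne B ((hQ0mem B).mp hB).1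
  have hPQne' : ∀ C ∈ PQ, C ≠ (∅ : Set E) := fun C hC => hPne C ((hPQmem C).mp hC).1
  -- assemble R
  set R : Finset (Set E) := ((R1 ∪ P0) ∪ Q0) ∪ PQ with hRdef
  have hRne : ∀ A ∈ R, A ≠ (∅ : Set E) := by
    intro A hA
    rw [hRdef] at hA
    rcases Finset.mem_union.mp hA with h | h
    · rcases Finset.mem_union.mp h with h' | h'
      · rcases Finset.mem_union.mp h' with h'' | h''
        · exact hR1ne A h''
        · exact hP0ne' A h''
      · exact hQ0ne' A h'
    · exact hPQne' A h
  have hRd1 : ∀ C ∈ R1 ∪ P0, ∀ C' ∈ R1 ∪ P0, C ≠ C' → C ∩ C' = ∅ :=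
    hcomb R1 P0 hR1d hP0d cross_R1_P0
  have hRd2 : ∀ C ∈ (R1 ∪ P0) ∪ Q0, ∀ C' ∈ (R1 ∪ P0) ∪ Q0, C ≠ C' → C ∩ C' = ∅ := by
    apply hcomb (R1 ∪ P0) Q0 hRd1 hQ0d
    intro C hC B hB
    rcases Finset.mem_union.mp hC with h | h
    · exact cross_R1_Q0 C h B hB
    · exact cross_P0_Q0 C h B hB
  have hRd : ∀ C ∈ R, ∀ C' ∈ R, C ≠ C' → C ∩ C' = ∅ := by
    rw [hRdef]
    apply hcomb ((R1 ∪ P0) ∪ Q0) PQ hRd2 hPQd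
    intro C hC D hD
    rcases Finset.mem_union.mp hC with h | h
    · rcases Finset.mem_union.mp h with h' | h'
      · exact cross_R1_PQ C h' D hD
      · exact cross_P0_PQ C h' D hD
    · exact cross_Q0_PQ C h D hD
  have hRU : sU R = X ∪ Y := by
    rw [hRdef, sU_union, sU_union, sU_union, hR1U]
    have hx : sU P0 ∪ sU P1 ∪ sU PQ = X := by
      rw [← sU_union, ← sU_union, hPsplit, hPU]
    have hy : sU Q0 ∪ sU Q1 ∪ sU PQ = Y := by
      rw [← sU_union, ← sU_union, hQsplit, hQU]
    rw [← hx, ← hy]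
    ext x
    simp only [Set.mem_union]
    tauto
  -- assemble S
  set S : Finset (Set E) := S1 ∪ PQ with hSdef
  have hSne : ∀ J ∈ S, J ≠ (∅ : Set E) := by
    intro J hJ
    rcases Finset.mem_union.mp hJ with h | h
    · exact hS1ne J h
    · exact hPQne' J h
  have hSd : ∀ J ∈ S, ∀ J' ∈ S, J ≠ J' → J ∩ J' = ∅ :=
    hcomb S1 PQ hS1d hPQd cross_S1_PQ
  have hSU : sU S = X ∩ Y := by
    rw [hSdef, sU_union, hS1U]
    ext x
    simp only [Set.mem_union, Set.mem_inter_iff]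
    constructor
    · rintro (⟨h1, h2⟩ | h)
      · exact ⟨hsUP1X h1, hsUQ1Y h2⟩
      · obtain ⟨C, hC, hxC⟩ := mem_sU.mp h
        have h1 := (hPQmem C).mp hC
        exact ⟨hPsubX C h1.1 hxC, hQsubY C h1.2 hxC⟩
    · rintro ⟨hx1, hx2⟩
      have hx1' : x ∈ sU P := hPU.symm ▸ hx1
      have hx2' : x ∈ sU Q := hQU.symm ▸ hx2
      obtain ⟨A, hA, hxA⟩ := mem_sU.mp hx1'
      obtain ⟨B, hB, hxB⟩ := mem_sU.mp hx2'
      by_cases hAQ : A ∈ Q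
      · exact Or.inr (mem_sU.mpr ⟨A, (hPQmem A).mpr ⟨hA, hAQ⟩, hxA⟩)
      · by_cases hBP : B ∈ P
        · exact Or.inr (mem_sU.mpr ⟨B, (hPQmem B).mpr ⟨hBP, hB⟩, hxB⟩)
        · refine Or.inl ⟨?_, ?_⟩
          · apply mem_sU.mpr
            refine ⟨A, (hP1mem A).mpr ⟨hA, ?_, hAQ⟩, hxA⟩
            intro h
            exact Set.eq_empty_iff_forall_notMem.mp h x ⟨hxA, hx2⟩
          · apply mem_sU.mpr
            refine ⟨B, (hQ1mem B).mpr ⟨hB, ?_, hBP⟩, hxB⟩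
            intro h
            exact Set.eq_empty_iff_forall_notMem.mp h x ⟨hxB, hx1⟩
  -- sum computations
  have hd_R1_P0 : Disjoint R1 P0 := hfinset_disj R1 P0 hR1ne cross_R1_P0
  have hd_R1P0_Q0 : Disjoint (R1 ∪ P0) Q0 := by
    apply hfinset_disj _ _ (fun C hC => by
      rcases Finset.mem_union.mp hC with h | h
      · exact hR1ne C h
      · exact hP0ne' C h)
    intro C hC B hB
    rcases Finset.mem_union.mp hC with h | h
    · exact cross_R1_Q0 C h B hB
    · exact cross_P0_Q0 C h B hB
  have hd_R1P0Q0_PQ : Disjoint ((R1 ∪ P0) ∪ Q0) PQ := by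
    apply hfinset_disj _ _ (fun C hC => by
      rcases Finset.mem_union.mp hC with h | h
      · rcases Finset.mem_union.mp h with h' | h'
        · exact hR1ne C h'
        · exact hP0ne' C h'
      · exact hQ0ne' C h)
    intro C hC D hD
    rcases Finset.mem_union.mp hC with h | h
    · rcases Finset.mem_union.mp h with h' | h'
      · exact cross_R1_PQ C h' D hD
      · exact cross_P0_PQ C h' D hD
    · exact cross_Q0_PQ C h D hD
  have hd_S1_PQ : Disjoint S1 PQ := hfinset_disj S1 PQ hS1ne cross_S1_PQ
  have hsumR : ∑ A ∈ R, max (f A) 0 = ∑ A ∈ R1, max (f A) 0 + ∑ A ∈ P0, max (f A) 0 +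
      ∑ A ∈ Q0, max (f A) 0 + ∑ A ∈ PQ, max (f A) 0 := by
    rw [hRdef, Finset.sum_union hd_R1P0Q0_PQ, Finset.sum_union hd_R1P0_Q0,
      Finset.sum_union hd_R1_P0]
  have hsumS : ∑ A ∈ S, max (f A) 0 = ∑ A ∈ S1, max (f A) 0 + ∑ A ∈ PQ, max (f A) 0 := by
    rw [hSdef, Finset.sum_union hd_S1_PQ]
  -- final estimates
  have hfinal1 : fc (X ∪ Y) ≤ ∑ A ∈ R, max (f A) 0 := fc_le (X ∪ Y) R hRne hRd hRU
  have hfinal2 : fc (X ∩ Y) ≤ ∑ A ∈ S, max (f A) 0 := fc_le (X ∩ Y) S hSne hSd hSU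
  rw [← hPval, ← hQval, hsumPsplit, hsumQsplit]
  rw [hsumR] at hfinal1
  rw [hsumS] at hfinal2
  linarith
end

section
/- Let φ be a setfunction with bounded variation on a set-algebra (J, B) with φ(∅) = 0, written as φ = φ₁ − φ₂ with φ₁, φ₂ increasing and φᵢ(∅)=0. Define the Choquet extension φ̂(f) for bounded measurable f via φ̂(f) = ∫_c^∞ φ{f ≥ t} dt + c·φ(J) for any c ≤ inf f. Then |φ̂(f) − φ̂(g)| ≤ var(φ) · ‖f − g‖_∞ for all bounded measurable f, g, where var(φ) is the total variation of φ. -/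
open MeasureTheory Set

section Aux
variable {J : Type*} [MeasurableSpace J]

/-- The set of chain-variation sums from `∅` to `Y`. -/
def chainSet (φ : Set J → ℝ) (Y : Set J) : Set ℝ :=
  {s | ∃ (n : ℕ) (X : ℕ → Set J),
      (∀ i ≤ n, MeasurableSet (X i)) ∧ X 0 = ∅ ∧ X n = Y ∧
      (∀ i < n, X i ⊆ X (i + 1)) ∧
      s = ∑ i ∈ Finset.range n, |φ (X (i + 1)) - φ (X i)|}

lemma chain_subset {X : ℕ → Set J} {n : ℕ} (h : ∀ i < n, X i ⊆ X (i + 1))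
    {i j : ℕ} (hij : i ≤ j) (hj : j ≤ n) : X i ⊆ X j := by
  induction j, hij using Nat.le_induction with
  | base => exact subset_rfl
  | succ k hk ih =>
      exact (ih (le_trans (Nat.le_succ k) hj)).trans (h k (Nat.lt_of_succ_le hj))

lemma abs_mem_chainSet (φ : Set J → ℝ) {Y : Set J} (hY : MeasurableSet Y) :
    |φ Y - φ ∅| ∈ chainSet φ Y := by
  refine ⟨1, fun i => if i = 0 then ∅ else Y, ?_, by simp, by simp, ?_, by simp⟩
  · intro i _; by_cases h : i = 0 <;> simp [h, hY]
  · intro i hi; interval_cases i; simp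

lemma chainSet_extend (φ : Set J → ℝ) {X Y : Set J} (hY : MeasurableSet Y)
    (hXY : X ⊆ Y) {s : ℝ} (hs : s ∈ chainSet φ X) :
    s + |φ Y - φ X| ∈ chainSet φ Y := by
  obtain ⟨n, C, hmeas, h0, hn, hmono, hsum⟩ := hs
  refine ⟨n + 1, fun i => if i ≤ n then C i else Y, ?_, ?_, ?_, ?_, ?_⟩
  · intro i _; by_cases h : i ≤ n
    · simp only [h, if_true]; exact hmeas i h
    · simp only [h, if_false]; exact hY
  · simp [h0]
  · simp
  · intro i hi
    rcases Nat.lt_or_ge i n with h | h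
    · simp only [h.le, if_true, Nat.succ_le_of_lt h, if_true]
      exact hmono i h
    · have hin : i = n := Nat.le_antisymm (Nat.lt_succ_iff.mp hi) h
      subst hin
      simp only [le_refl, if_true, Nat.not_succ_le_self, if_false, hn]
      exact hXY
  · rw [Finset.sum_range_succ]
    have h1 : ∀ i < n, (if i ≤ n then C i else Y) = C i := fun i hi => if_pos hi.le
    have : ∑ i ∈ Finset.range n,
        |φ (if i + 1 ≤ n then C (i + 1) else Y) - φ (if i ≤ n then C i else Y)| =
        ∑ i ∈ Finset.range n, |φ (C (i + 1)) - φ (C i)| := by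
      apply Finset.sum_congr rfl
      intro i hi
      rw [Finset.mem_range] at hi
      rw [if_pos (Nat.succ_le_of_lt hi), if_pos hi.le]
    rw [this, ← hsum]
    simp [Nat.not_succ_le_self, hn]

variable {φ : Set J → ℝ} {V : ℝ}

lemma chainSet_le (hV : IsLUB (chainSet φ Set.univ) V) {Y : Set J}
    (hY : MeasurableSet Y) {s : ℝ} (hs : s ∈ chainSet φ Y) : s ≤ V := by
  have := hV.1 (chainSet_extend φ MeasurableSet.univ (subset_univ Y) hs)
  have h2 : (0:ℝ) ≤ |φ Set.univ - φ Y| := abs_nonneg _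
  linarith

lemma chainSet_bddAbove (hV : IsLUB (chainSet φ Set.univ) V) {Y : Set J}
    (hY : MeasurableSet Y) : BddAbove (chainSet φ Y) :=
  ⟨V, fun _ hs => chainSet_le hV hY hs⟩

lemma chainSet_nonempty {Y : Set J} (hY : MeasurableSet Y) :
    (chainSet φ Y).Nonempty := ⟨_, abs_mem_chainSet φ hY⟩

/-- Key superadditivity of the variation function `sSup (chainSet φ ·)`. -/
lemma var_superadd (hV : IsLUB (chainSet φ Set.univ) V) {X Y : Set J}
    (hX : MeasurableSet X) (hY : MeasurableSet Y) (hXY : X ⊆ Y) :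
    sSup (chainSet φ X) + |φ Y - φ X| ≤ sSup (chainSet φ Y) := by
  have h : sSup (chainSet φ X) ≤ sSup (chainSet φ Y) - |φ Y - φ X| := by
    apply csSup_le (chainSet_nonempty hX)
    intro s hs
    have := le_csSup (chainSet_bddAbove hV hY) (chainSet_extend φ hY hXY hs)
    linarith
  linarith

lemma var_empty (h0 : φ ∅ = 0) (hV : IsLUB (chainSet φ Set.univ) V) :
    sSup (chainSet φ (∅ : Set J)) = 0 := by
  apply le_antisymm
  · apply csSup_le (chainSet_nonempty MeasurableSet.empty)
    rintro s ⟨n, C, hmeas, hc0, hcn, hmono, rfl⟩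
    have hall : ∀ i ≤ n, C i = ∅ := by
      intro i hi
      have := chain_subset hmono hi le_rfl
      rw [hcn] at this
      exact subset_empty_iff.mp this
    have : ∀ i ∈ Finset.range n, |φ (C (i + 1)) - φ (C i)| = 0 := by
      intro i hi
      rw [Finset.mem_range] at hi
      rw [hall i hi.le, hall (i+1) (Nat.succ_le_of_lt hi), h0]
      simp
    rw [Finset.sum_congr rfl this]
    simp
  · have : |φ (∅ : Set J) - φ ∅| ∈ chainSet φ (∅ : Set J) :=
      abs_mem_chainSet φ MeasurableSet.empty
    have h := le_csSup (chainSet_bddAbove hV MeasurableSet.empty) this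
    simpa using h

/-- measurability of level sets -/
lemma level_meas {f : J → ℝ} (hf : Measurable f) (t : ℝ) :
    MeasurableSet {x | t ≤ f x} := measurableSet_le measurable_const hf

/-- Integrability of the level function of a bounded measurable function,
for a monotone set function vanishing at `∅`. -/
lemma integrableOn_level (ψ : Set J → ℝ)
    (hmono : ∀ X Y : Set J, MeasurableSet X → MeasurableSet Y → X ⊆ Y → ψ X ≤ ψ Y)
    (hψ0 : ψ ∅ = 0) {f : J → ℝ} (hf : Measurable f) {K : ℝ} (hK : ∀ x, f x ≤ K)
    (a : ℝ) : IntegrableOn (fun t => ψ {x | t ≤ f x}) (Ioi a) := by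
  set F : ℝ → ℝ := fun t => ψ {x | t ≤ f x} with hF
  have hanti : Antitone F := by
    intro t s hts
    exact hmono _ _ (level_meas hf s) (level_meas hf t) (fun x hx => le_trans hts hx)
  have hFmeas : Measurable F := hanti.measurable
  have hnonneg : ∀ t, 0 ≤ F t := by
    intro t
    have := hmono ∅ _ MeasurableSet.empty (level_meas hf t) (empty_subset _)
    rwa [hψ0] at this
  have hbdd : ∀ t, F t ≤ ψ Set.univ := fun t =>
    hmono _ _ (level_meas hf t) MeasurableSet.univ (subset_univ _)
  have hIoc : IntegrableOn F (Ioc a (max a K)) := by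
    apply Measure.integrableOn_of_bounded (M := ψ Set.univ) measure_Ioc_lt_top.ne
      hFmeas.aestronglyMeasurable
    filter_upwards with t
    rw [Real.norm_eq_abs, abs_of_nonneg (hnonneg t)]
    exact hbdd t
  have hzero : ∀ t ∈ Ioi (max a K), F t = 0 := by
    intro t ht
    have hemp : {x | t ≤ f x} = (∅ : Set J) := by
      ext x
      simp only [mem_setOf_eq, mem_empty_iff_false, iff_false, not_le]
      exact lt_of_le_of_lt (hK x) (lt_of_le_of_lt (le_max_right a K) ht)
    rw [hF]; simp only []
    rw [hemp, hψ0]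
  have hIoi : IntegrableOn F (Ioi (max a K)) := by
    apply IntegrableOn.congr_fun integrableOn_zero
    · intro t ht; exact (hzero t ht).symm
    · exact measurableSet_Ioi
  have := hIoc.union hIoi
  rwa [Ioc_union_Ioi_eq_Ioi (le_max_left a K)] at this

end Aux

section Key
variable {J : Type*} [MeasurableSpace J]

lemma shift_integral (G : ℝ → ℝ) (hG : Measurable G) (c M : ℝ) :
    ∫ t in Ioi c, G (t - M) = ∫ s in Ioi (c - M), G s := by
  rw [← integral_indicator measurableSet_Ioi, ← integral_indicator measurableSet_Ioi]
  have h : ∀ t : ℝ, (Ioi c).indicator (fun t => G (t - M)) t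
      = (Ioi (c - M)).indicator G (t - M) := by
    intro t
    by_cases h : t ∈ Ioi c
    · rw [indicator_of_mem h, indicator_of_mem (by simpa [sub_lt_sub_iff_right] using h)]
    · rw [indicator_of_notMem h, indicator_of_notMem (by simpa [sub_lt_sub_iff_right] using h)]
  simp_rw [h]
  exact integral_sub_right_eq_self ((Ioi (c - M)).indicator G) M

/-- The key one-sided estimate. -/
lemma key_estimate (ψ : Set J → ℝ)
    (hmono : ∀ X Y : Set J, MeasurableSet X → MeasurableSet Y → X ⊆ Y → ψ X ≤ ψ Y)
    (hψ0 : ψ ∅ = 0) {f g : J → ℝ} (hf : Measurable f) (hg : Measurable g)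
    {K : ℝ} (hfK : ∀ x, f x ≤ K) (hgK : ∀ x, g x ≤ K)
    {M : ℝ} (hM0 : 0 ≤ M) (hfg : ∀ x, f x ≤ g x + M)
    (c : ℝ) :
    ∫ t in Ioi c, ψ {x | t ≤ f x} ≤ (∫ t in Ioi c, ψ {x | t ≤ g x}) + M * ψ Set.univ := by
  set F : ℝ → ℝ := fun t => ψ {x | t ≤ f x} with hF
  set G : ℝ → ℝ := fun t => ψ {x | t ≤ g x} with hGdef
  have hGanti : Antitone G := fun t s hts =>
    hmono _ _ (level_meas hg s) (level_meas hg t) (fun x hx => le_trans hts hx)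
  have hGmeas : Measurable G := hGanti.measurable
  have hGint : IntegrableOn G (Ioi (c - M)) :=
    integrableOn_level ψ hmono hψ0 hg hgK (c - M)
  -- the shifted function is the level function of `g + M`
  have hshift_eq : ∀ t : ℝ, G (t - M) = ψ {x | t ≤ g x + M} := by
    intro t
    have hset : {x | t - M ≤ g x} = {x | t ≤ g x + M} := by
      ext x
      simp only [mem_setOf_eq]
      constructor <;> intro h <;> linarith
    show ψ {x | t - M ≤ g x} = ψ {x | t ≤ g x + M}
    rw [hset]
  have hShiftInt : IntegrableOn (fun t => G (t - M)) (Ioi c) := by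
    have := integrableOn_level ψ hmono hψ0 (hg.add_const M)
      (K := K + M) (fun x => by have := hgK x; linarith) c
    apply this.congr_fun _ measurableSet_Ioi
    intro t _
    exact (hshift_eq t).symm
  have hFint : IntegrableOn F (Ioi c) := integrableOn_level ψ hmono hψ0 hf hfK c
  have step1 : ∫ t in Ioi c, F t ≤ ∫ t in Ioi c, G (t - M) := by
    apply setIntegral_mono_on hFint hShiftInt measurableSet_Ioi
    intro t _
    exact hmono _ _ (level_meas hf t) (level_meas hg (t - M))
      (fun x hx => by simp only [mem_setOf_eq] at *; have := hfg x; linarith)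
  have step2 : ∫ t in Ioi c, G (t - M) = ∫ s in Ioi (c - M), G s :=
    shift_integral G hGmeas c M
  have hsplit : Ioc (c - M) c ∪ Ioi c = Ioi (c - M) :=
    Ioc_union_Ioi_eq_Ioi (by linarith)
  have hd : Disjoint (Ioc (c - M) c) (Ioi c) := Ioc_disjoint_Ioi le_rfl
  have step3 : ∫ s in Ioi (c - M), G s
      = (∫ s in Ioc (c - M) c, G s) + ∫ s in Ioi c, G s := by
    rw [← hsplit]
    exact setIntegral_union hd measurableSet_Ioi
      (hGint.mono_set (hsplit ▸ subset_union_left))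
      (hGint.mono_set (hsplit ▸ subset_union_right))
  have step4 : (∫ s in Ioc (c - M) c, G s) ≤ M * ψ Set.univ := by
    have hb : ∀ s ∈ Ioc (c - M) c, G s ≤ ψ Set.univ := fun s _ =>
      hmono _ _ (level_meas hg s) MeasurableSet.univ (subset_univ _)
    calc (∫ s in Ioc (c - M) c, G s) ≤ ∫ _ in Ioc (c - M) c, ψ Set.univ :=
          setIntegral_mono_on (hGint.mono_set (hsplit ▸ subset_union_left))
            (integrableOn_const measure_Ioc_lt_top.ne) measurableSet_Ioc hb
      _ = M * ψ Set.univ := by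
          rw [setIntegral_const, measureReal_def, Real.volume_Ioc, smul_eq_mul]
          congr 1
          rw [ENNReal.toReal_ofReal (by linarith : (0:ℝ) ≤ c - (c - M))]
          ring
  calc ∫ t in Ioi c, F t ≤ ∫ t in Ioi c, G (t - M) := step1
    _ = (∫ s in Ioc (c - M) c, G s) + ∫ s in Ioi c, G s := by rw [step2, step3]
    _ ≤ (∫ s in Ioi c, G s) + M * ψ Set.univ := by linarith [step4]

end Key

section Jordan
variable {J : Type*} [MeasurableSpace J]

noncomputable def vfun (φ : Set J → ℝ) : Set J → ℝ := fun X => sSup (chainSet φ X)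
noncomputable def phiP (φ : Set J → ℝ) : Set J → ℝ := fun X => (vfun φ X + φ X) / 2
noncomputable def phiM (φ : Set J → ℝ) : Set J → ℝ := fun X => (vfun φ X - φ X) / 2

variable {φ : Set J → ℝ} {V : ℝ}

lemma phiP_sub_phiM (X : Set J) : phiP φ X - phiM φ X = φ X := by
  simp only [phiP, phiM]; ring

lemma phiP_mono (hV : IsLUB (chainSet φ Set.univ) V) :
    ∀ X Y : Set J, MeasurableSet X → MeasurableSet Y → X ⊆ Y → phiP φ X ≤ phiP φ Y := by
  intro X Y hX hY hXY
  have h := var_superadd hV hX hY hXY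
  have habs := neg_le_abs (φ Y - φ X)
  simp only [phiP, vfun]
  linarith

lemma phiM_mono (hV : IsLUB (chainSet φ Set.univ) V) :
    ∀ X Y : Set J, MeasurableSet X → MeasurableSet Y → X ⊆ Y → phiM φ X ≤ phiM φ Y := by
  intro X Y hX hY hXY
  have h := var_superadd hV hX hY hXY
  have habs := le_abs_self (φ Y - φ X)
  simp only [phiM, vfun]
  linarith

lemma phiP_empty (h0 : φ ∅ = 0) (hV : IsLUB (chainSet φ Set.univ) V) :
    phiP φ (∅ : Set J) = 0 := by
  simp [phiP, vfun, var_empty h0 hV, h0]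

lemma phiM_empty (h0 : φ ∅ = 0) (hV : IsLUB (chainSet φ Set.univ) V) :
    phiM φ (∅ : Set J) = 0 := by
  simp [phiM, vfun, var_empty h0 hV, h0]

lemma phiP_add_phiM_univ (hV : IsLUB (chainSet φ Set.univ) V) :
    phiP φ (Set.univ : Set J) + phiM φ Set.univ = V := by
  have h : vfun φ (Set.univ : Set J) = V :=
    hV.csSup_eq (chainSet_nonempty MeasurableSet.univ)
  simp only [phiP, phiM]
  rw [show (vfun φ (Set.univ : Set J) + φ Set.univ) / 2
      + (vfun φ Set.univ - φ Set.univ) / 2 = vfun φ Set.univ by ring, h]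

end Jordan

open MeasureTheory in
theorem stmt_9 {J : Type*} [MeasurableSpace J] (φ : Set J → ℝ)
    (h0 : φ ∅ = 0)
    (φ₁ φ₂ : Set J → ℝ)
    (h₁0 : φ₁ ∅ = 0) (h₂0 : φ₂ ∅ = 0)
    (hφ₁mono : ∀ X Y : Set J, MeasurableSet X → MeasurableSet Y → X ⊆ Y → φ₁ X ≤ φ₁ Y)
    (hφ₂mono : ∀ X Y : Set J, MeasurableSet X → MeasurableSet Y → X ⊆ Y → φ₂ X ≤ φ₂ Y)
    (hdiff : ∀ X : Set J, MeasurableSet X → φ X = φ₁ X - φ₂ X)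
    (V : ℝ)
    (hV : IsLUB {s | ∃ (n : ℕ) (X : ℕ → Set J),
        (∀ i ≤ n, MeasurableSet (X i)) ∧ X 0 = ∅ ∧ X n = Set.univ ∧
        (∀ i < n, X i ⊆ X (i + 1)) ∧
        s = ∑ i ∈ Finset.range n, |φ (X (i + 1)) - φ (X i)|} V)
    (hat : (J → ℝ) → ℝ)
    (hhat : ∀ (f : J → ℝ) (c : ℝ), (∀ x, c ≤ f x) →
      hat f = (∫ t in Set.Ioi c, φ {x | t ≤ f x}) + c * φ Set.univ)
    (f g : J → ℝ) (hf : Measurable f) (hg : Measurable g)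
    (hfb : ∃ M : ℝ, ∀ x, |f x| ≤ M) (hgb : ∃ M : ℝ, ∀ x, |g x| ≤ M)
    (M : ℝ) (hM : ∀ x, |f x - g x| ≤ M) :
    |hat f - hat g| ≤ V * M := by
  have hV' : IsLUB (chainSet φ Set.univ) V := hV
  by_cases hJ : Nonempty J
  · -- main case
    obtain ⟨Kf, hKf⟩ := hfb
    obtain ⟨Kg, hKg⟩ := hgb
    set K : ℝ := max Kf Kg with hK
    set c : ℝ := min (-Kf) (-Kg) with hc
    have hfK : ∀ x, f x ≤ K := fun x =>
      le_trans (le_trans (le_abs_self _) (hKf x)) (le_max_left _ _)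
    have hgK : ∀ x, g x ≤ K := fun x =>
      le_trans (le_trans (le_abs_self _) (hKg x)) (le_max_right _ _)
    have hcf : ∀ x, c ≤ f x := fun x =>
      le_trans (min_le_left _ _) (neg_le_of_abs_le (hKf x))
    have hcg : ∀ x, c ≤ g x := fun x =>
      le_trans (min_le_right _ _) (neg_le_of_abs_le (hKg x))
    have hM0 : 0 ≤ M := by
      obtain ⟨x⟩ := hJ
      exact le_trans (abs_nonneg _) (hM x)
    have hfg : ∀ x, f x ≤ g x + M := fun x => by
      have := (abs_le.mp (hM x)).2; linarith
    have hgf : ∀ x, g x ≤ f x + M := fun x => by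
      have := (abs_le.mp (hM x)).1; linarith
    have hPmono := phiP_mono (J := J) (φ := φ) hV'
    have hMmono := phiM_mono (J := J) (φ := φ) hV'
    have hPempty := phiP_empty (J := J) h0 hV'
    have hMempty := phiM_empty (J := J) h0 hV'
    -- integrability
    have hIfp : IntegrableOn (fun t => phiP φ {x | t ≤ f x}) (Set.Ioi c) :=
      integrableOn_level (phiP φ) hPmono hPempty hf hfK c
    have hIfm : IntegrableOn (fun t => phiM φ {x | t ≤ f x}) (Set.Ioi c) :=
      integrableOn_level (phiM φ) hMmono hMempty hf hfK c
    have hIgp : IntegrableOn (fun t => phiP φ {x | t ≤ g x}) (Set.Ioi c) :=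
      integrableOn_level (phiP φ) hPmono hPempty hg hgK c
    have hIgm : IntegrableOn (fun t => phiM φ {x | t ≤ g x}) (Set.Ioi c) :=
      integrableOn_level (phiM φ) hMmono hMempty hg hgK c
    -- split the integrals
    have hsplitf : ∫ t in Set.Ioi c, φ {x | t ≤ f x}
        = (∫ t in Set.Ioi c, phiP φ {x | t ≤ f x})
          - ∫ t in Set.Ioi c, phiM φ {x | t ≤ f x} := by
      rw [← integral_sub hIfp hIfm]
      apply setIntegral_congr_fun measurableSet_Ioi
      intro t _
      exact (phiP_sub_phiM _).symm
    have hsplitg : ∫ t in Set.Ioi c, φ {x | t ≤ g x}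
        = (∫ t in Set.Ioi c, phiP φ {x | t ≤ g x})
          - ∫ t in Set.Ioi c, phiM φ {x | t ≤ g x} := by
      rw [← integral_sub hIgp hIgm]
      apply setIntegral_congr_fun measurableSet_Ioi
      intro t _
      exact (phiP_sub_phiM _).symm
    -- the four key estimates
    have e1 : ∫ t in Set.Ioi c, phiP φ {x | t ≤ f x}
        ≤ (∫ t in Set.Ioi c, phiP φ {x | t ≤ g x}) + M * phiP φ Set.univ :=
      key_estimate (phiP φ) hPmono hPempty hf hg hfK hgK hM0 hfg c
    have e2 : ∫ t in Set.Ioi c, phiP φ {x | t ≤ g x}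
        ≤ (∫ t in Set.Ioi c, phiP φ {x | t ≤ f x}) + M * phiP φ Set.univ :=
      key_estimate (phiP φ) hPmono hPempty hg hf hgK hfK hM0 hgf c
    have e3 : ∫ t in Set.Ioi c, phiM φ {x | t ≤ f x}
        ≤ (∫ t in Set.Ioi c, phiM φ {x | t ≤ g x}) + M * phiM φ Set.univ :=
      key_estimate (phiM φ) hMmono hMempty hf hg hfK hgK hM0 hfg c
    have e4 : ∫ t in Set.Ioi c, phiM φ {x | t ≤ g x}
        ≤ (∫ t in Set.Ioi c, phiM φ {x | t ≤ f x}) + M * phiM φ Set.univ :=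
      key_estimate (phiM φ) hMmono hMempty hg hf hgK hfK hM0 hgf c
    have hVsum : phiP φ (Set.univ : Set J) + phiM φ Set.univ = V :=
      phiP_add_phiM_univ hV'
    rw [hhat f c hcf, hhat g c hcg, hsplitf, hsplitg]
    rw [abs_le]
    constructor <;> nlinarith [e1, e2, e3, e4, hVsum]
  · -- J is empty
    have hE : IsEmpty J := not_nonempty_iff.mp hJ
    have hφ : ∀ X : Set J, φ X = 0 := fun X => by
      rw [Set.eq_empty_of_isEmpty X]; exact h0
    have hf0 : hat f = 0 := by
      rw [hhat f 0 (fun x => (hE.elim x))]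
      simp [hφ]
    have hg0 : hat g = 0 := by
      rw [hhat g 0 (fun x => (hE.elim x))]
      simp [hφ]
    have hset : {s | ∃ (n : ℕ) (X : ℕ → Set J),
        (∀ i ≤ n, MeasurableSet (X i)) ∧ X 0 = ∅ ∧ X n = Set.univ ∧
        (∀ i < n, X i ⊆ X (i + 1)) ∧
        s = ∑ i ∈ Finset.range n, |φ (X (i + 1)) - φ (X i)|} = {0} := by
      ext s
      simp only [Set.mem_setOf_eq, Set.mem_singleton_iff]
      constructor
      · rintro ⟨n, X, -, -, -, -, rfl⟩
        apply Finset.sum_eq_zero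
        intro i _
        rw [hφ, hφ]
        simp
      · rintro rfl
        exact ⟨0, fun _ => ∅, by simp, rfl,
          (Set.univ_eq_empty_iff.mpr hE).symm, by simp, by simp⟩
    rw [hset] at hV
    have hV0 : V = 0 := hV.unique isLUB_singleton
    rw [hf0, hg0, hV0]
    simp
end

section
/- Let φ be a bounded submodular setfunction on a sigma-algebra (J, B) with φ(∅) = 0, and f, g bounded measurable functions J → ℝ. Then φ̂(f ∨ g) + φ̂(f ∧ g) ≤ φ̂(f) + φ̂(g), where φ̂ is the Choquet integral and (f∨g)(x)=max(f(x),g(x)), (f∧g)(x)=min(f(x),g(x)). -/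
open MeasureTheory

-- measurability of t ↦ φ (S t) along an antitone chain of measurable sets
lemma chain_meas {J : Type*} [MeasurableSpace J] (φ : Set J → ℝ)
    (hbdd : ∃ M : ℝ, ∀ X : Set J, MeasurableSet X → |φ X| ≤ M)
    (hsub : ∀ X Y : Set J, MeasurableSet X → MeasurableSet Y →
      φ (X ∪ Y) + φ (X ∩ Y) ≤ φ X + φ Y)
    (S : ℝ → Set J) (hSm : ∀ t, MeasurableSet (S t))
    (hSa : ∀ ⦃t s : ℝ⦄, t ≤ s → S s ⊆ S t) :
    Measurable (fun t => φ (S t)) := by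
  obtain ⟨Mφ, hMφ⟩ := hbdd
  set M : ℝ → ℝ := fun t => sSup (φ '' {A | MeasurableSet A ∧ S t ⊆ A}) with hM
  have hba : ∀ t, BddAbove (φ '' {A | MeasurableSet A ∧ S t ⊆ A}) := by
    intro t
    refine ⟨Mφ, ?_⟩
    rintro r ⟨A, ⟨hA, _⟩, rfl⟩
    exact (abs_le.mp (hMφ A hA)).2
  have hne : ∀ t, φ (Set.univ : Set J) ∈ φ '' {A | MeasurableSet A ∧ S t ⊆ A} :=
    fun t => ⟨Set.univ, ⟨MeasurableSet.univ, Set.subset_univ _⟩, rfl⟩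
  have hMmono : Monotone M := by
    intro t s hts
    refine csSup_le_csSup (hba s) ⟨_, hne t⟩ ?_
    rintro r ⟨A, ⟨hA, hSA⟩, rfl⟩
    exact ⟨A, ⟨hA, (hSa hts).trans hSA⟩, rfl⟩
  have hkey : Monotone (fun t => M t - φ (S t)) := by
    intro t s hts
    simp only
    have hstep : ∀ r ∈ φ '' {A | MeasurableSet A ∧ S t ⊆ A},
        r ≤ φ (S t) - φ (S s) + M s := by
      rintro r ⟨A, ⟨hA, hSA⟩, rfl⟩
      have hss : S s ⊆ S t := hSa hts
      set B : Set J := S s ∪ (A \ S t) with hB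
      have hBm : MeasurableSet B := (hSm s).union (hA.diff (hSm t))
      have hU : S t ∪ B = A := by
        ext x
        constructor
        · rintro (h | h | h)
          · exact hSA h
          · exact hSA (hss h)
          · exact h.1
        · intro hx
          by_cases hxt : x ∈ S t
          · exact Or.inl hxt
          · exact Or.inr (Or.inr ⟨hx, hxt⟩)
      have hI : S t ∩ B = S s := by
        ext x
        constructor
        · rintro ⟨hxt, h | h⟩
          · exact h
          · exact absurd hxt h.2
        · intro hx
          exact ⟨hss hx, Or.inl hx⟩
      have h1 := hsub (S t) B (hSm t) hBm
      rw [hU, hI] at h1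
      have h2 : φ B ≤ M s := le_csSup (hba s) ⟨B, ⟨hBm, Set.subset_union_left⟩, rfl⟩
      linarith
    have h3 : M t ≤ φ (S t) - φ (S s) + M s := csSup_le ⟨_, hne t⟩ hstep
    linarith
  have : (fun t => φ (S t)) = fun t => M t - (M t - φ (S t)) := by
    funext t; ring
  rw [this]
  exact hMmono.measurable.sub hkey.measurable

lemma chain_int {J : Type*} [MeasurableSpace J] (φ : Set J → ℝ)
    (h0 : φ ∅ = 0)
    (hbdd : ∃ M : ℝ, ∀ X : Set J, MeasurableSet X → |φ X| ≤ M)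
    (hsub : ∀ X Y : Set J, MeasurableSet X → MeasurableSet Y →
      φ (X ∪ Y) + φ (X ∩ Y) ≤ φ X + φ Y)
    (F : J → ℝ) (hF : Measurable F) (MF : ℝ) (hMF : ∀ x, F x ≤ MF) (c : ℝ) :
    IntegrableOn (fun t => φ {x | t ≤ F x}) (Set.Ioi c) := by
  obtain ⟨Mφ, hMφ⟩ := hbdd
  have hSm : ∀ t : ℝ, MeasurableSet {x | t ≤ F x} := fun t =>
    measurableSet_le measurable_const hF
  have hmeas : Measurable (fun t => φ {x | t ≤ F x}) := by
    refine chain_meas φ ⟨Mφ, hMφ⟩ hsub (fun t => {x | t ≤ F x}) hSm ?_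
    intro t s hts x hx
    exact le_trans hts hx
  have hcover : Set.Ioi c ⊆ Set.Ioc c MF ∪ Set.Ioi MF := by
    intro t ht
    rcases le_or_gt t MF with h | h
    · exact Or.inl ⟨ht, h⟩
    · exact Or.inr h
  refine IntegrableOn.mono_set ?_ hcover
  refine IntegrableOn.union ?_ ?_
  · refine Measure.integrableOn_of_bounded (M := Mφ) (by simp) hmeas.aestronglyMeasurable ?_
    exact Filter.Eventually.of_forall fun t => by
      simpa [Real.norm_eq_abs] using hMφ _ (hSm t)
  · have hz : ∀ t ∈ Set.Ioi MF, φ {x | t ≤ F x} = 0 := by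
      intro t ht
      have : {x | t ≤ F x} = (∅ : Set J) := by
        ext x
        simp only [Set.mem_setOf_eq, Set.mem_empty_iff_false, iff_false, not_le]
        exact lt_of_le_of_lt (hMF x) ht
      rw [this, h0]
    refine (integrableOn_congr_fun hz measurableSet_Ioi).mpr ?_
    simp [integrableOn_const]


open MeasureTheory in
theorem stmt_10 {J : Type*} [MeasurableSpace J] (φ : Set J → ℝ)
    (h0 : φ ∅ = 0)
    (hbdd : ∃ M : ℝ, ∀ X : Set J, MeasurableSet X → |φ X| ≤ M)
    (hsub : ∀ X Y : Set J, MeasurableSet X → MeasurableSet Y →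
      φ (X ∪ Y) + φ (X ∩ Y) ≤ φ X + φ Y)
    (hat : (J → ℝ) → ℝ)
    (hhat : ∀ (f : J → ℝ) (c : ℝ), (∀ x, c ≤ f x) →
      hat f = (∫ t in Set.Ioi c, φ {x | t ≤ f x}) + c * φ Set.univ)
    (f g : J → ℝ) (hf : Measurable f) (hg : Measurable g)
    (hfb : ∃ M : ℝ, ∀ x, |f x| ≤ M) (hgb : ∃ M : ℝ, ∀ x, |g x| ≤ M) :
    hat (fun x => max (f x) (g x)) + hat (fun x => min (f x) (g x)) ≤
      hat f + hat g := by
  obtain ⟨Mf, hMf⟩ := hfb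
  obtain ⟨Mg, hMg⟩ := hgb
  set K : ℝ := |Mf| + |Mg| with hK
  have hfK : ∀ x, |f x| ≤ K := fun x =>
    le_trans (hMf x) (le_trans (le_abs_self Mf) (by simp [hK, abs_nonneg]))
  have hgK : ∀ x, |g x| ≤ K := fun x =>
    le_trans (hMg x) (le_trans (le_abs_self Mg) (by simp [hK, abs_nonneg]))
  set c : ℝ := -K - 1 with hc
  have hcf : ∀ x, c ≤ f x := fun x => by
    have := (abs_le.mp (hfK x)).1; simp only [hc]; linarith
  have hcg : ∀ x, c ≤ g x := fun x => by
    have := (abs_le.mp (hgK x)).1; simp only [hc]; linarith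
  have hcmax : ∀ x, c ≤ max (f x) (g x) := fun x => le_trans (hcf x) (le_max_left _ _)
  have hcmin : ∀ x, c ≤ min (f x) (g x) := fun x => le_min (hcf x) (hcg x)
  -- upper bounds
  have hupf : ∀ x, f x ≤ K := fun x => (abs_le.mp (hfK x)).2
  have hupg : ∀ x, g x ≤ K := fun x => (abs_le.mp (hgK x)).2
  have hupmax : ∀ x, max (f x) (g x) ≤ K := fun x => max_le (hupf x) (hupg x)
  have hupmin : ∀ x, min (f x) (g x) ≤ K := fun x => le_trans (min_le_left _ _) (hupf x)
  -- integrabilities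
  have If : IntegrableOn (fun t => φ {x | t ≤ f x}) (Set.Ioi c) :=
    chain_int φ h0 hbdd hsub f hf K hupf c
  have Ig : IntegrableOn (fun t => φ {x | t ≤ g x}) (Set.Ioi c) :=
    chain_int φ h0 hbdd hsub g hg K hupg c
  have Imax : IntegrableOn (fun t => φ {x | t ≤ max (f x) (g x)}) (Set.Ioi c) :=
    chain_int φ h0 hbdd hsub _ (hf.max hg) K hupmax c
  have Imin : IntegrableOn (fun t => φ {x | t ≤ min (f x) (g x)}) (Set.Ioi c) :=
    chain_int φ h0 hbdd hsub _ (hf.min hg) K hupmin c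
  rw [hhat f c hcf, hhat g c hcg, hhat _ c hcmax, hhat _ c hcmin]
  have hmain :
      (∫ t in Set.Ioi c, φ {x | t ≤ max (f x) (g x)}) +
        (∫ t in Set.Ioi c, φ {x | t ≤ min (f x) (g x)}) ≤
      (∫ t in Set.Ioi c, φ {x | t ≤ f x}) + (∫ t in Set.Ioi c, φ {x | t ≤ g x}) := by
    rw [← integral_add Imax Imin, ← integral_add If Ig]
    refine integral_mono (Imax.add Imin) (If.add Ig) ?_
    intro t
    simp only [Pi.add_apply]
    have hU : {x | t ≤ max (f x) (g x)} = {x | t ≤ f x} ∪ {x | t ≤ g x} := by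
      ext x; simp [le_max_iff]
    have hI : {x | t ≤ min (f x) (g x)} = {x | t ≤ f x} ∩ {x | t ≤ g x} := by
      ext x; simp [le_min_iff]
    rw [hU, hI]
    exact hsub _ _ (measurableSet_le measurable_const hf)
      (measurableSet_le measurable_const hg)
  linarith
end

section
/- Let E be a finite set and φ : 2^E → ℝ a submodular setfunction with φ(∅) = 0. For every maximal chain ∅ = S₀ ⊂ S₁ ⊂ … ⊂ Sₙ = E of subsets, there exists an additive setfunction α (i.e., α(X) = ∑_{x∈X} w(x) for some w : E → ℝ) with α ≤ φ pointwise and α(Sᵢ) = φ(Sᵢ) for all i. If φ is increasing, then α ≥ 0 (i.e., w ≥ 0). (Greedy algorithm / Corollary to Choquet's theorem, finite case.) -/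
theorem stmt_14 {E : Type*} [Fintype E] [DecidableEq E]
    (φ : Finset E → ℝ) (h0 : φ ∅ = 0)
    (hsub : ∀ X Y : Finset E, φ (X ∪ Y) + φ (X ∩ Y) ≤ φ X + φ Y)
    (n : ℕ) (S : ℕ → Finset E)
    (hS0 : S 0 = ∅) (hSn : S n = Finset.univ)
    (hstep : ∀ i < n, ∃ x ∉ S i, S (i + 1) = insert x (S i)) :
    ∃ w : E → ℝ,
      (∀ X : Finset E, ∑ x ∈ X, w x ≤ φ X) ∧
      (∀ i ≤ n, ∑ x ∈ S i, w x = φ (S i)) ∧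
      ((∀ X Y : Finset E, X ⊆ Y → φ X ≤ φ Y) → ∀ x, 0 ≤ w x) := by
  classical
  have hmono : ∀ i j, i ≤ j → j ≤ n → S i ⊆ S j := by
    intro i j hij hjn
    induction j with
    | zero => interval_cases i; exact Finset.Subset.refl _
    | succ k ih =>
      rcases Nat.eq_or_lt_of_le hij with h | h
      · subst h; exact Finset.Subset.refl _
      · obtain ⟨x, hx, hxS⟩ := hstep k (by omega)
        rw [hxS]
        exact (ih (by omega) (by omega)).trans (Finset.subset_insert _ _)
  have hex : ∀ x : E, ∃ j, x ∈ S j := fun x => ⟨n, by rw [hSn]; exact Finset.mem_univ x⟩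
  set t : E → ℕ := fun x => Nat.find (hex x) with ht
  set w : E → ℝ := fun x => φ (S (t x)) - φ (S (t x - 1)) with hw
  have htle : ∀ x, t x ≤ n := fun x => Nat.find_le (by rw [hSn]; exact Finset.mem_univ x)
  -- the weight of the element inserted at step i
  have hwstep : ∀ i < n, ∀ x ∉ S i, S (i + 1) = insert x (S i) →
      w x = φ (S (i + 1)) - φ (S i) := by
    intro i hi x hx hxS
    have hteq : t x = i + 1 := by
      rw [ht]
      rw [Nat.find_eq_iff]
      constructor
      · rw [hxS]; exact Finset.mem_insert_self _ _
      · intro j hj hmem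
        exact hx (hmono j i (by omega) (by omega) hmem)
    simp [hw, hteq]
  have hchain : ∀ i ≤ n, ∑ x ∈ S i, w x = φ (S i) := by
    intro i hi
    induction i with
    | zero => simp [hS0, h0]
    | succ k ih =>
      obtain ⟨x, hx, hxS⟩ := hstep k (by omega)
      rw [hxS, Finset.sum_insert hx, ih (by omega), hwstep k (by omega) x hx hxS, hxS]
      ring
  refine ⟨w, ?_, hchain, ?_⟩
  · have key : ∀ i ≤ n, ∀ X ⊆ S i, ∑ x ∈ X, w x ≤ φ X := by
      intro i hi
      induction i with
      | zero =>
        intro X hX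
        rw [hS0] at hX
        rw [Finset.subset_empty.mp hX]
        simp [h0]
      | succ k ih =>
        intro X hX
        obtain ⟨x, hx, hxS⟩ := hstep k (by omega)
        by_cases hxX : x ∈ X
        · have hX' : X.erase x ⊆ S k := by
            intro y hy
            have hyX := Finset.mem_of_mem_erase hy
            have := hX hyX
            rw [hxS, Finset.mem_insert] at this
            rcases this with h | h
            · exact absurd (h ▸ hyX) (by simpa [h] using Finset.ne_of_mem_erase hy ∘ fun _ => h)
            · exact h
          have hsum : ∑ y ∈ X, w y = w x + ∑ y ∈ X.erase x, w y :=
            (Finset.add_sum_erase _ _ hxX).symm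
          have hIH := ih (by omega) _ hX'
          -- submodularity: X ∪ S k = S (k+1), X ∩ S k = X.erase x
          have hunion : X ∪ S k = S (k + 1) := by
            apply Finset.Subset.antisymm
            · rw [hxS]
              exact Finset.union_subset (by rw [← hxS]; exact hX) (Finset.subset_insert _ _)
            · rw [hxS]
              intro y hy
              rcases Finset.mem_insert.mp hy with h | h
              · exact Finset.mem_union_left _ (h ▸ hxX)
              · exact Finset.mem_union_right _ h
          have hinter : X ∩ S k = X.erase x := by
            apply Finset.Subset.antisymm
            · intro y hy
              rw [Finset.mem_inter] at hy
              refine Finset.mem_erase.mpr ⟨?_, hy.1⟩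
              rintro rfl; exact hx hy.2
            · intro y hy
              exact Finset.mem_inter.mpr ⟨Finset.mem_of_mem_erase hy, hX' hy⟩
          have hs := hsub X (S k)
          rw [hunion, hinter] at hs
          have hwx := hwstep k (by omega) x hx hxS
          rw [hsum, hwx]
          linarith
        · have : X ⊆ S k := by
            intro y hy
            have := hX hy
            rw [hxS, Finset.mem_insert] at this
            rcases this with h | h
            · exact absurd (h ▸ hy) hxX
            · exact h
          exact ih (by omega) _ this
    intro X
    exact key n le_rfl X (by rw [hSn]; exact Finset.subset_univ _)
  · intro hinc x
    have h1 : S (t x - 1) ⊆ S (t x) := hmono _ _ (by omega) (htle x)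
    have := hinc _ _ h1
    simp only [hw]
    linarith
end

section
/- Let φ be an increasing submodular setfunction on a sigma-algebra (J, B). Define φ_•(X) = inf over all increasing sequences X₁ ⊆ X₂ ⊆ … in B with ∪ₙ Xₙ = X of limₙ φ(Xₙ). Then φ_• is increasing, submodular, and continuous from below (i.e., for any increasing sequence Xₙ with union X, φ_•(Xₙ) → φ_•(X)). -/
open Filter Set

theorem stmt_17 {J : Type*} [MeasurableSpace J] (φ : Set J → ℝ)
    (hmono : ∀ X Y : Set J, MeasurableSet X → MeasurableSet Y → X ⊆ Y → φ X ≤ φ Y)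
    (hsub : ∀ X Y : Set J, MeasurableSet X → MeasurableSet Y →
      φ (X ∪ Y) + φ (X ∩ Y) ≤ φ X + φ Y)
    (lc : Set J → ℝ)
    (hlc : ∀ X : Set J, MeasurableSet X → IsGLB
      {r | ∃ S : ℕ → Set J, (∀ n, MeasurableSet (S n)) ∧ Monotone S ∧
        (⋃ n, S n) = X ∧
        Filter.Tendsto (fun n => φ (S n)) Filter.atTop (nhds r)} (lc X)) :
    (∀ X Y : Set J, MeasurableSet X → MeasurableSet Y → X ⊆ Y → lc X ≤ lc Y) ∧
    (∀ X Y : Set J, MeasurableSet X → MeasurableSet Y →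
      lc (X ∪ Y) + lc (X ∩ Y) ≤ lc X + lc Y) ∧
    (∀ S : ℕ → Set J, (∀ n, MeasurableSet (S n)) → Monotone S →
      Filter.Tendsto (fun n => lc (S n)) Filter.atTop (nhds (lc (⋃ n, S n)))) := by
  -- boundedness of φ ∘ S for monotone measurable S
  have bdd : ∀ (W : ℕ → Set J), (∀ k, MeasurableSet (W k)) → Monotone W →
      BddAbove (Set.range fun k => φ (W k)) := by
    intro W hW hWm
    refine ⟨φ (⋃ k, W k), ?_⟩
    rintro r ⟨k, rfl⟩
    exact hmono _ _ (hW k) (MeasurableSet.iUnion hW) (subset_iUnion W k)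
  -- the limit of φ ∘ S exists and is the sup
  have lim_mem : ∀ (W : ℕ → Set J), (∀ k, MeasurableSet (W k)) → Monotone W →
      Tendsto (fun k => φ (W k)) atTop (nhds (⨆ k, φ (W k))) := by
    intro W hW hWm
    exact tendsto_atTop_ciSup (fun i j h => hmono _ _ (hW i) (hW j) (hWm h)) (bdd W hW hWm)
  -- monotonicity of lc
  have hmonolc : ∀ X Y : Set J, MeasurableSet X → MeasurableSet Y → X ⊆ Y → lc X ≤ lc Y := by
    intro X Y hX hY hXY
    refine (hlc Y hY).2 ?_
    rintro r ⟨S, hS, hSm, hSU, hSlim⟩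
    have hS' : ∀ k, MeasurableSet (S k ∩ X) := fun k => (hS k).inter hX
    have hSm' : Monotone fun k => S k ∩ X := fun i j h => inter_subset_inter_left _ (hSm h)
    have hU' : (⋃ k, S k ∩ X) = X := by
      rw [← Set.iUnion_inter, hSU, Set.inter_eq_right.mpr hXY]
    have h1 : lc X ≤ ⨆ k, φ (S k ∩ X) :=
      (hlc X hX).1 ⟨_, hS', hSm', hU', lim_mem _ hS' hSm'⟩
    have h2 : (⨆ k, φ (S k ∩ X)) ≤ r := by
      refine ciSup_le fun k => ?_
      have := hmono _ _ (hS' k) (hS k) inter_subset_left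
      have h3 : φ (S k) ≤ r :=
        Monotone.ge_of_tendsto (fun i j h => hmono _ _ (hS i) (hS j) (hSm h)) hSlim k
      linarith
    exact h1.trans h2
  refine ⟨hmonolc, ?_, ?_⟩
  · -- submodularity
    intro X Y hX hY
    have key2 : ∀ s ∈ {r | ∃ S : ℕ → Set J, (∀ n, MeasurableSet (S n)) ∧ Monotone S ∧
        (⋃ n, S n) = X ∧ Tendsto (fun n => φ (S n)) atTop (nhds r)},
        ∀ t ∈ {r | ∃ S : ℕ → Set J, (∀ n, MeasurableSet (S n)) ∧ Monotone S ∧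
        (⋃ n, S n) = Y ∧ Tendsto (fun n => φ (S n)) atTop (nhds r)},
        lc (X ∪ Y) + lc (X ∩ Y) ≤ s + t := by
      rintro s ⟨S, hS, hSm, hSU, hSlim⟩ t ⟨T, hT, hTm, hTU, hTlim⟩
      have hUmeas : ∀ k, MeasurableSet (S k ∪ T k) := fun k => (hS k).union (hT k)
      have hUm : Monotone fun k => S k ∪ T k := fun i j h => union_subset_union (hSm h) (hTm h)
      have hVmeas : ∀ k, MeasurableSet (S k ∩ T k) := fun k => (hS k).inter (hT k)
      have hVm : Monotone fun k => S k ∩ T k := fun i j h =>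
        inter_subset_inter (hSm h) (hTm h)
      have hUU : (⋃ k, S k ∪ T k) = X ∪ Y := by
        rw [Set.iUnion_union_distrib, hSU, hTU]
      have hVU : (⋃ k, S k ∩ T k) = X ∩ Y := by
        rw [Set.iUnion_inter_of_monotone hSm hTm, hSU, hTU]
      have h1 : lc (X ∪ Y) ≤ ⨆ k, φ (S k ∪ T k) :=
        (hlc _ (hX.union hY)).1 ⟨_, hUmeas, hUm, hUU, lim_mem _ hUmeas hUm⟩
      have h2 : lc (X ∩ Y) ≤ ⨆ k, φ (S k ∩ T k) :=
        (hlc _ (hX.inter hY)).1 ⟨_, hVmeas, hVm, hVU, lim_mem _ hVmeas hVm⟩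
      have h3 : (⨆ k, φ (S k ∪ T k)) + (⨆ k, φ (S k ∩ T k)) ≤ s + t :=
        le_of_tendsto_of_tendsto'
          ((lim_mem _ hUmeas hUm).add (lim_mem _ hVmeas hVm))
          (hSlim.add hTlim) (fun k => hsub _ _ (hS k) (hT k))
      linarith
    have hXle : ∀ t ∈ {r | ∃ S : ℕ → Set J, (∀ n, MeasurableSet (S n)) ∧ Monotone S ∧
        (⋃ n, S n) = Y ∧ Tendsto (fun n => φ (S n)) atTop (nhds r)},
        lc (X ∪ Y) + lc (X ∩ Y) - t ≤ lc X := by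
      intro t ht
      refine (hlc X hX).2 fun s hs => ?_
      have := key2 s hs t ht
      linarith
    have : lc (X ∪ Y) + lc (X ∩ Y) - lc X ≤ lc Y := by
      refine (hlc Y hY).2 fun t ht => ?_
      have := hXle t ht
      linarith
    linarith
  · -- continuity from below
    intro S hS hSm
    set X := ⋃ n, S n with hXdef
    have hXmeas : MeasurableSet X := MeasurableSet.iUnion hS
    have hlcS_mono : Monotone fun n => lc (S n) := fun i j h =>
      hmonolc _ _ (hS i) (hS j) (hSm h)
    have hlcS_bdd : BddAbove (Set.range fun n => lc (S n)) := by
      refine ⟨lc X, ?_⟩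
      rintro r ⟨n, rfl⟩
      exact hmonolc _ _ (hS n) hXmeas (subset_iUnion S n)
    set L := ⨆ n, lc (S n) with hLdef
    have htend : Tendsto (fun n => lc (S n)) atTop (nhds L) :=
      tendsto_atTop_ciSup hlcS_mono hlcS_bdd
    have hLle : L ≤ lc X := ciSup_le fun n => hmonolc _ _ (hS n) hXmeas (subset_iUnion S n)
    -- the hard direction: lc X ≤ L
    have hXleL : lc X ≤ L := by
      refine le_of_forall_pos_le_add fun ε hε => ?_
      -- choose approximating sequences for each S n
      have hchoice : ∀ n, ∃ R : ℕ → Set J, (∀ k, MeasurableSet (R k)) ∧ Monotone R ∧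
          (⋃ k, R k) = S n ∧ (⨆ k, φ (R k)) < lc (S n) + ε / 2 ^ (n + 1) := by
        intro n
        obtain ⟨r, ⟨R, hRm, hRmono, hRU, hRlim⟩, -, hrlt⟩ :=
          (hlc (S n) (hS n)).exists_between
            (lt_add_of_pos_right _ (by positivity : (0:ℝ) < ε / 2 ^ (n + 1)))
        refine ⟨R, hRm, hRmono, hRU, ?_⟩
        rwa [tendsto_nhds_unique (lim_mem R hRm hRmono) hRlim]
      choose R hRmeas hRmono hRU hRlt using hchoice
      -- recursively nest them
      set T : ℕ → ℕ → Set J :=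
        fun n => Nat.rec (R 0) (fun n Tn k => R (n + 1) k ∪ Tn k) n with hTdef
      have hTsucc : ∀ n k, T (n + 1) k = R (n + 1) k ∪ T n k := fun n k => rfl
      have hTmeas : ∀ n k, MeasurableSet (T n k) := by
        intro n
        induction n with
        | zero => exact hRmeas 0
        | succ n ih => exact fun k => (hRmeas (n + 1) k).union (ih k)
      have hTmono : ∀ n, Monotone (T n) := by
        intro n
        induction n with
        | zero => exact hRmono 0
        | succ n ih => exact fun i j h => union_subset_union (hRmono (n + 1) h) (ih h)
      have hTU : ∀ n, (⋃ k, T n k) = S n := by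
        intro n
        induction n with
        | zero => exact hRU 0
        | succ n ih =>
          show (⋃ k, R (n + 1) k ∪ T n k) = S (n + 1)
          rw [Set.iUnion_union_distrib, hRU, ih,
            Set.union_eq_left.mpr (hSm (Nat.le_succ n))]
      have hTbound : ∀ n, (⨆ k, φ (T n k)) ≤ lc (S n) + ε - ε / 2 ^ (n + 1) := by
        intro n
        induction n with
        | zero =>
          have := hRlt 0
          have h2 : ε / 2 ^ (0 + 1) + ε / 2 ^ (0 + 1) = ε := by norm_num
          have := this.le
          show (⨆ k, φ (T 0 k)) ≤ lc (S 0) + ε - ε / 2 ^ (0 + 1)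
          calc (⨆ k, φ (T 0 k)) ≤ lc (S 0) + ε / 2 ^ (0 + 1) := by
                exact_mod_cast (hRlt 0).le
            _ ≤ lc (S 0) + ε - ε / 2 ^ (0 + 1) := by linarith
        | succ n ih =>
          have hImeas : ∀ k, MeasurableSet (R (n + 1) k ∩ T n k) :=
            fun k => (hRmeas (n + 1) k).inter (hTmeas n k)
          have hImono : Monotone fun k => R (n + 1) k ∩ T n k := fun i j h =>
            inter_subset_inter (hRmono (n + 1) h) (hTmono n h)
          have hIU : (⋃ k, R (n + 1) k ∩ T n k) = S n := by
            rw [Set.iUnion_inter_of_monotone (hRmono (n + 1)) (hTmono n), hRU, hTU,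
              Set.inter_eq_right.mpr (hSm (Nat.le_succ n))]
          have hIlc : lc (S n) ≤ ⨆ k, φ (R (n + 1) k ∩ T n k) :=
            (hlc (S n) (hS n)).1 ⟨_, hImeas, hImono, hIU, lim_mem _ hImeas hImono⟩
          have hsum : (⨆ k, φ (T (n + 1) k)) + (⨆ k, φ (R (n + 1) k ∩ T n k)) ≤
              (⨆ k, φ (R (n + 1) k)) + (⨆ k, φ (T n k)) := by
            refine le_of_tendsto_of_tendsto'
              ((lim_mem _ (hTmeas (n + 1)) (hTmono (n + 1))).add (lim_mem _ hImeas hImono))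
              ((lim_mem _ (hRmeas (n + 1)) (hRmono (n + 1))).add (lim_mem _ (hTmeas n) (hTmono n)))
              (fun k => ?_)
            have := hsub (R (n + 1) k) (T n k) (hRmeas (n + 1) k) (hTmeas n k)
            exact this
          have harith : ε / 2 ^ (n + 1 + 1) + ε / 2 ^ (n + 1 + 1) = ε / 2 ^ (n + 1) := by
            rw [← add_div]
            rw [pow_succ]
            ring
          have hr := (hRlt (n + 1)).le
          linarith
      -- diagonal sequence
      set U : ℕ → Set J := fun k => T k k with hUdef
      have hUmeas : ∀ k, MeasurableSet (U k) := fun k => hTmeas k k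
      have hTmonoN : ∀ k, Monotone fun n => T n k := fun k =>
        monotone_nat_of_le_succ fun n => subset_union_right
      have hUmono : Monotone U := monotone_nat_of_le_succ fun k =>
        (hTmonoN k (Nat.le_succ k)).trans (hTmono (k + 1) (Nat.le_succ k))
      have hUU : (⋃ k, U k) = X := by
        apply subset_antisymm
        · refine iUnion_subset fun k => ?_
          have h1 : T k k ⊆ S k := (hTU k) ▸ subset_iUnion (T k) k
          exact h1.trans (subset_iUnion S k)
        · intro x hx
          obtain ⟨n, hn⟩ := mem_iUnion.mp hx
          rw [← hTU n] at hn
          obtain ⟨k, hk⟩ := mem_iUnion.mp hn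
          refine mem_iUnion.mpr ⟨max n k, ?_⟩
          have h1 : T n k ⊆ T (max n k) k := hTmonoN k (le_max_left n k)
          have h2 : T (max n k) k ⊆ T (max n k) (max n k) := hTmono _ (le_max_right n k)
          exact h2 (h1 hk)
      have hlcU : lc X ≤ ⨆ k, φ (U k) :=
        (hlc X hXmeas).1 ⟨U, hUmeas, hUmono, hUU, lim_mem U hUmeas hUmono⟩
      have hUb : (⨆ k, φ (U k)) ≤ L + ε := by
        refine ciSup_le fun k => ?_
        have h1 : φ (U k) ≤ ⨆ j, φ (T k j) :=
          le_ciSup (bdd (T k) (hTmeas k) (hTmono k)) k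
        have h2 := hTbound k
        have h3 : lc (S k) ≤ L := le_ciSup hlcS_bdd k
        have h4 : (0:ℝ) < ε / 2 ^ (k + 1) := by positivity
        linarith
      linarith
    have hLX : lc X = L := le_antisymm hXleL hLle
    rw [hLX]
    exact htend
end
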